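/- arXiv:2106.14600 — 8 statements merged into one kernel-verified Lean document; each statement's English description precedes it below -/
import Mathlib

section
/- If φ : A → B and ψ : C → D are bijections between cofinite subsets of ℕ, then the induced maps φ* and ψ* on ℕ* are equal if and only if the set {n ∈ A ∩ C : φ(n) = ψ(n)} is cofinite in ℕ. -/
/-- A free ultrafilter on ℕ: one containing every cofinite set. -/
def IsFreeUF (u : Ultrafilter ℕ) : Prop := (u : Filter ℕ) ≤ Filter.cofinite

lemma exists_separated_subset (f g : ℕ → ℕ) (S : Set ℕ) (hS : S.Infinite)
    (hfi : Set.InjOn f S) (hgi : Set.InjOn g S) (hne : ∀ n ∈ S, f n ≠ g n) :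
    ∃ T : Set ℕ, T.Infinite ∧ T ⊆ S ∧ ∀ x ∈ T, ∀ y ∈ T, f x ≠ g y := by
  have hbad : ∀ F : Finset ℕ, ∃ n, n ∈ S ∧ n ∉ F ∧ f n ∉ g '' ↑F ∧ g n ∉ f '' ↑F := by
    intro F
    have h1 : (S ∩ f ⁻¹' (g '' ↑F)).Finite := by
      apply Set.Finite.of_finite_image (f := f)
      · exact (F.finite_toSet.image g).subset
          (by rintro y ⟨x, ⟨-, hx⟩, rfl⟩; exact hx)
      · exact hfi.mono Set.inter_subset_left
    have h2 : (S ∩ g ⁻¹' (f '' ↑F)).Finite := by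
      apply Set.Finite.of_finite_image (f := g)
      · exact (F.finite_toSet.image f).subset
          (by rintro y ⟨x, ⟨-, hx⟩, rfl⟩; exact hx)
      · exact hgi.mono Set.inter_subset_left
    have hinf : (S \ (↑F ∪ (S ∩ f ⁻¹' (g '' ↑F)) ∪ (S ∩ g ⁻¹' (f '' ↑F)))).Infinite :=
      hS.diff ((F.finite_toSet.union h1).union h2)
    obtain ⟨n, hnS, hn⟩ := hinf.nonempty
    refine ⟨n, hnS, ?_, ?_, ?_⟩
    · exact fun h => hn (Or.inl (Or.inl h))
    · exact fun h => hn (Or.inl (Or.inr ⟨hnS, h⟩))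
    · exact fun h => hn (Or.inr ⟨hnS, h⟩)
  classical
  let pick : Finset ℕ → ℕ := fun F => (hbad F).choose
  let Fs : ℕ → Finset ℕ := fun n => Nat.rec (motive := fun _ => Finset ℕ) ∅ (fun _ F => insert (pick F) F) n
  have hFsucc : ∀ k, Fs (k + 1) = insert (pick (Fs k)) (Fs k) := fun k => rfl
  have hinv : ∀ k, (↑(Fs k) : Set ℕ) ⊆ S ∧
      (∀ x ∈ Fs k, ∀ y ∈ Fs k, f x ≠ g y) ∧ (Fs k).card = k := by
    intro k
    induction k with
    | zero => simp [Fs]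
    | succ k ih =>
      obtain ⟨hsub, hsep, hcard⟩ := ih
      obtain ⟨haS, haF, hafg, hagf⟩ := (hbad (Fs k)).choose_spec
      rw [hFsucc]
      refine ⟨?_, ?_, ?_⟩
      · intro x hx
        rcases Finset.mem_insert.mp hx with h | h
        · exact h ▸ haS
        · exact hsub h
      · intro x hx y hy
        rcases Finset.mem_insert.mp hx with hx | hx <;>
          rcases Finset.mem_insert.mp hy with hy | hy
        · subst hx; subst hy; exact hne _ haS
        · subst hx; exact fun h => hafg ⟨y, hy, h.symm⟩
        · subst hy; exact fun h => hagf ⟨x, hx, h⟩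
        · exact hsep x hx y hy
      · rw [Finset.card_insert_of_notMem haF, hcard]
  have hmono : ∀ j k, j ≤ k → Fs j ⊆ Fs k := by
    intro j k hjk
    induction k with
    | zero => simpa [Nat.le_zero.mp hjk] using Finset.Subset.refl _
    | succ k ih =>
      rcases Nat.lt_succ_iff_lt_or_eq.mp (Nat.lt_succ_of_le hjk) with h | h
      · exact (ih (Nat.lt_succ_iff.mp h)).trans
          (by rw [hFsucc]; exact Finset.subset_insert _ _)
      · subst h; exact Finset.Subset.refl _
  refine ⟨{n | ∃ k, n ∈ Fs k}, ?_, ?_, ?_⟩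
  · intro hT
    have hsub : Fs (hT.toFinset.card + 1) ⊆ hT.toFinset := by
      intro x hx
      simp only [Set.Finite.mem_toFinset, Set.mem_setOf_eq]
      exact ⟨hT.toFinset.card + 1, hx⟩
    have hcard := Finset.card_le_card hsub
    rw [(hinv (hT.toFinset.card + 1)).2.2] at hcard
    omega
  · rintro n ⟨k, hk⟩
    exact (hinv k).1 hk
  · rintro x ⟨j, hj⟩ y ⟨k, hk⟩
    exact (hinv (max j k)).2.1 x (hmono j _ (le_max_left _ _) hj)
      y (hmono k _ (le_max_right _ _) hk)

/-- If φ : A → B and ψ : C → D are bijections between cofinite subsets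
of ℕ (represented by total functions f, g restricting to bijections A → B, C → D),
then the induced maps on free ultrafilters are equal iff
{n ∈ A ∩ C : f n = g n} is cofinite in ℕ. -/
theorem partial_induced_eq_iff_cofinite_agree
    (f g : ℕ → ℕ) (A B C D : Set ℕ)
    (hA : Aᶜ.Finite) (hB : Bᶜ.Finite) (hC : Cᶜ.Finite) (hD : Dᶜ.Finite)
    (hf : Set.BijOn f A B) (hg : Set.BijOn g C D) :
    (∀ u : Ultrafilter ℕ, IsFreeUF u → Ultrafilter.map f u = Ultrafilter.map g u) ↔
    ({n : ℕ | n ∈ A ∩ C ∧ f n = g n}ᶜ).Finite := by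
  constructor
  · intro h
    by_contra hinf
    rw [← Set.not_infinite, not_not] at hinf
    set S : Set ℕ := (A ∩ C) ∩ {n | f n ≠ g n} with hSdef
    have hSinf : S.Infinite := by
      intro hfin
      apply hinf
      refine (((hA.union hC).union hfin).subset ?_)
      intro n hn
      simp only [Set.mem_compl_iff, Set.mem_setOf_eq, not_and] at hn
      by_cases hnA : n ∈ A
      · by_cases hnC : n ∈ C
        · exact Or.inr ⟨⟨hnA, hnC⟩, hn ⟨hnA, hnC⟩⟩
        · exact Or.inl (Or.inr hnC)
      · exact Or.inl (Or.inl hnA)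
    obtain ⟨T, hTinf, hTS, hTsep⟩ := exists_separated_subset f g S hSinf
      (hf.injOn.mono (fun n hn => hn.1.1)) (hg.injOn.mono (fun n hn => hn.1.2))
      (fun n hn => hn.2)
    have hne : (Filter.cofinite ⊓ Filter.principal T).NeBot := by
      rw [Filter.inf_principal_neBot_iff]
      intro U hU
      rw [Filter.mem_cofinite] at hU
      have : (T \ Uᶜ).Infinite := hTinf.diff hU
      obtain ⟨x, hxT, hxU⟩ := this.nonempty
      exact ⟨x, not_not.mp hxU, hxT⟩
    set u := Ultrafilter.of (Filter.cofinite ⊓ Filter.principal T) with hu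
    have hufree : IsFreeUF u := (Ultrafilter.of_le _).trans inf_le_left
    have hTu : T ∈ u := (Ultrafilter.of_le _)
      (Filter.mem_inf_of_right (Filter.mem_principal_self T))
    have heq := h u hufree
    have h1 : f '' T ∈ Ultrafilter.map f u :=
      Ultrafilter.mem_map.mpr (Filter.mem_of_superset hTu (Set.subset_preimage_image f T))
    have h2 : g '' T ∈ Ultrafilter.map f u := by
      rw [heq]
      exact Ultrafilter.mem_map.mpr
        (Filter.mem_of_superset hTu (Set.subset_preimage_image g T))
    have hempty : f '' T ∩ g '' T = ∅ := by
      ext z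
      simp only [Set.mem_inter_iff, Set.mem_image, Set.mem_empty_iff_false, iff_false]
      rintro ⟨⟨x, hx, rfl⟩, ⟨y, hy, hxy⟩⟩
      exact hTsep x hx y hy hxy.symm
    have := Filter.inter_mem h1 h2
    rw [hempty] at this
    exact Filter.empty_notMem _ this
  · intro hfin u hu
    have hE : {n : ℕ | n ∈ A ∩ C ∧ f n = g n} ∈ u := hu (Filter.mem_cofinite.mpr hfin)
    have hcong : (u : Filter ℕ).map f = (u : Filter ℕ).map g :=
      Filter.map_congr (Filter.eventuallyEq_of_mem hE (fun n hn => hn.2))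
    exact Ultrafilter.coe_injective (by simpa using hcong)
end

section
/- For a bijection φ between cofinite subsets of ℕ, define h(φ) = |ℕ \ ran φ| − |ℕ \ dom φ| ∈ ℤ. If φ and ψ are two such bijections with φ* = ψ* (equivalently, {n ∈ dom φ ∩ dom ψ : φ(n) = ψ(n)} is cofinite), then h(φ) = h(ψ). -/
/-- Pick an element of `Fin 3` distinct from two given ones. -/
def pick (a b : Fin 3) : Fin 3 :=
  if a = 0 then (if b = 1 then 2 else 1)
  else if a = 1 then (if b = 0 then 2 else 0)
  else (if b = 0 then 1 else 0)

lemma pick_ne : ∀ a b : Fin 3, pick a b ≠ a ∧ pick a b ≠ b := by decide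

/-- Predecessor relation used by `col`. -/
abbrev colPred (k : ℕ → ℕ) (T : Set ℕ) (n m : ℕ) : Prop := m < n ∧ m ∈ T ∧ k m = n

open Classical in
/-- Greedy 3-coloring adapted to the functional graph of `k` on `T`. -/
noncomputable def col (k : ℕ → ℕ) (T : Set ℕ) : ℕ → Fin 3
  | n =>
    let a : Fin 3 := if h : k n < n then col k T (k n) else 0
    let b : Fin 3 :=
      if h : ∃ m, colPred k T n m then
        col k T (Nat.find h)
      else 0
    pick a b
  termination_by n => n
  decreasing_by
    · exact h
    · convert (Nat.find_spec h).1

open Classical in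
lemma col_spec (k : ℕ → ℕ) (T : Set ℕ) (hinj : Set.InjOn k T)
    {n : ℕ} (hn : n ∈ T) (hkn : k n ∈ T) (hne : k n ≠ n) :
    col k T (k n) ≠ col k T n := by
  rcases lt_or_gt_of_ne hne with hlt | hgt
  · -- k n < n : the color of n avoids the color of k n
    conv_rhs => rw [col]
    rw [dif_pos hlt]
    exact fun h => ((pick_ne _ _).1 (h.symm)).elim
  · -- n < k n : the color of k n avoids the color of its predecessor, which is n
    conv_lhs => rw [col]
    have hex : ∃ m, m < k n ∧ m ∈ T ∧ k m = k n := ⟨n, hgt, hn, rfl⟩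
    rw [dif_pos hex]
    have hfind : Nat.find hex = n := by
      have hs := Nat.find_spec hex
      exact hinj hs.2.1 hn hs.2.2
    rw [hfind]
    exact (pick_ne _ _).2

lemma fixed_mem (v : Ultrafilter ℕ) (k : ℕ → ℕ) (T : Set ℕ)
    (hT : T ∈ v) (hinj : Set.InjOn k T) (hmap : Ultrafilter.map k v = v) :
    {n | k n = n} ∈ v := by
  by_contra hfix
  have hT' : T ∩ {n | k n ≠ n} ∈ v :=
    v.inter_mem hT (Ultrafilter.compl_mem_iff_notMem.mpr hfix)
  set T' : Set ℕ := T ∩ {n | k n ≠ n} with hT'def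
  have hinj' : Set.InjOn k T' := hinj.mono Set.inter_subset_left
  set c := col k T' with hc
  -- some color class belongs to v
  have hcol : ∃ i : Fin 3, {n | c n = i} ∈ v := by
    by_contra h
    push_neg at h
    have h0 : ∀ i : Fin 3, {n | c n = i}ᶜ ∈ v :=
      fun i => Ultrafilter.compl_mem_iff_notMem.mpr (h i)
    have hmem : ({n | c n = 0}ᶜ ∩ ({n | c n = 1}ᶜ ∩ {n | c n = 2}ᶜ)) ∈ v :=
      v.inter_mem (h0 0) (v.inter_mem (h0 1) (h0 2))
    obtain ⟨n, hn⟩ := Ultrafilter.nonempty_of_mem hmem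
    simp only [Set.mem_inter_iff, Set.mem_compl_iff, Set.mem_setOf_eq] at hn
    obtain ⟨hn0, hn1, hn2⟩ := hn
    have : ∀ x : Fin 3, x = 0 ∨ x = 1 ∨ x = 2 := by decide
    rcases this (c n) with h | h | h
    · exact hn0 h
    · exact hn1 h
    · exact hn2 h
  obtain ⟨i, hi⟩ := hcol
  have hpreT : k ⁻¹' T' ∈ v := by
    have : T' ∈ Ultrafilter.map k v := by rw [hmap]; exact hT'
    exact this
  have hprei : k ⁻¹' {n | c n = i} ∈ v := by
    have : {n | c n = i} ∈ Ultrafilter.map k v := by rw [hmap]; exact hi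
    exact this
  have hmem : (T' ∩ ({n | c n = i} ∩ (k ⁻¹' T' ∩ k ⁻¹' {n | c n = i}))) ∈ v :=
    v.inter_mem hT' (v.inter_mem hi (v.inter_mem hpreT hprei))
  obtain ⟨n, hn⟩ := Ultrafilter.nonempty_of_mem hmem
  simp only [Set.mem_inter_iff, Set.mem_preimage, Set.mem_setOf_eq] at hn
  obtain ⟨hnT, hni, hknT, hkni⟩ := hn
  have hne : k n ≠ n := hnT.2
  exact col_spec k T' hinj' hnT hknT hne (by rw [hc] at hkni hni; rw [hkni, hni])

/-- Counting lemma: for a bijection `f : A → B` and a cofinite `E ⊆ A`,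
`|Bᶜ| - |Aᶜ| = |(f '' E)ᶜ| - |Eᶜ|`. -/
lemma count_lemma (f : ℕ → ℕ) (A B E : Set ℕ)
    (hA : Aᶜ.Finite) (hB : Bᶜ.Finite) (hE : Eᶜ.Finite) (hEA : E ⊆ A)
    (hf : Set.BijOn f A B) :
    (Bᶜ.ncard : ℤ) - (Aᶜ.ncard : ℤ) = ((f '' E)ᶜ.ncard : ℤ) - (Eᶜ.ncard : ℤ) := by
  have hAE : (A \ E).Finite := hE.subset (fun x hx => hx.2)
  have hAcE : Aᶜ ⊆ Eᶜ := Set.compl_subset_compl.mpr hEA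
  have h1 : Eᶜ = Aᶜ ∪ (A \ E) := by
    ext x
    simp only [Set.mem_union, Set.mem_compl_iff, Set.mem_diff]
    constructor
    · intro h
      by_cases hx : x ∈ A
      · exact Or.inr ⟨hx, h⟩
      · exact Or.inl hx
    · rintro (h | ⟨_, h⟩) hxE
      · exact h (hEA hxE)
      · exact h hxE
  have hdisj1 : Disjoint Aᶜ (A \ E) :=
    Set.disjoint_left.mpr (fun x hx hx2 => hx hx2.1)
  have hcard1 : Eᶜ.ncard = Aᶜ.ncard + (A \ E).ncard := by
    rw [h1, Set.ncard_union_eq hdisj1 hA hAE]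
  have hfEB : f '' E ⊆ B := (Set.image_mono (f := f) hEA).trans hf.image_eq.subset
  have h2 : (f '' E)ᶜ = Bᶜ ∪ (B \ f '' E) := by
    ext x
    simp only [Set.mem_union, Set.mem_compl_iff, Set.mem_diff]
    constructor
    · intro h
      by_cases hx : x ∈ B
      · exact Or.inr ⟨hx, h⟩
      · exact Or.inl hx
    · rintro (h | ⟨_, h⟩) hxE
      · exact h (hfEB hxE)
      · exact h hxE
  have himg : f '' (A \ E) = B \ f '' E := by
    rw [hf.injOn.image_diff_subset hEA, hf.image_eq]
  have hBfE : (B \ f '' E).Finite := himg ▸ hAE.image f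
  have hdisj2 : Disjoint Bᶜ (B \ f '' E) :=
    Set.disjoint_left.mpr (fun x hx hx2 => hx hx2.1)
  have hcard2 : (f '' E)ᶜ.ncard = Bᶜ.ncard + (B \ f '' E).ncard := by
    rw [h2, Set.ncard_union_eq hdisj2 hB hBfE]
  have hcard3 : (B \ f '' E).ncard = (A \ E).ncard := by
    rw [← himg, Set.ncard_image_of_injOn (hf.injOn.mono Set.diff_subset)]
  rw [hcard1, hcard2, hcard3]
  push_cast
  ring

/-- For a bijection φ : A → B between cofinite subsets of ℕ define
h(φ) = |ℕ \ B| - |ℕ \ A| ∈ ℤ.  If φ : A → B and ψ : C → D induce the same map on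
free ultrafilters, then h(φ) = h(ψ). -/
theorem h_well_defined
    (f g : ℕ → ℕ) (A B C D : Set ℕ)
    (hA : Aᶜ.Finite) (hB : Bᶜ.Finite) (hC : Cᶜ.Finite) (hD : Dᶜ.Finite)
    (hf : Set.BijOn f A B) (hg : Set.BijOn g C D)
    (heq : ∀ u : Ultrafilter ℕ, IsFreeUF u → Ultrafilter.map f u = Ultrafilter.map g u) :
    (Bᶜ.ncard : ℤ) - (Aᶜ.ncard : ℤ) = (Dᶜ.ncard : ℤ) - (Cᶜ.ncard : ℤ) := by
  classical
  set S : Set ℕ := {n | n ∈ A ∩ C ∧ f n ≠ g n} with hSdef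
  -- Step 1: S is finite
  have hSfin : S.Finite := by
    rw [← Set.not_infinite]
    intro hinf
    have hne : (Filter.cofinite ⊓ Filter.principal S).NeBot :=
      hinf.cofinite_inf_principal_neBot
    obtain ⟨u, hu⟩ := Ultrafilter.exists_le (Filter.cofinite ⊓ Filter.principal S)
    have hufree : IsFreeUF u := hu.trans inf_le_left
    have hSu : S ∈ u := Filter.le_principal_iff.mp (hu.trans inf_le_right)
    have hSA : S ⊆ A := fun n hn => hn.1.1
    have hSC : S ⊆ C := fun n hn => hn.1.2
    have hfinjS : Set.InjOn f S := hf.injOn.mono hSA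
    have hginjS : Set.InjOn g S := hg.injOn.mono hSC
    set k : ℕ → ℕ := fun m => g (Function.invFunOn f S m) with hkdef
    have hTinj : Set.InjOn k (f '' S) := by
      intro x hx y hy hxy
      obtain ⟨a, ha, rfl⟩ := hx
      obtain ⟨b, hb, rfl⟩ := hy
      have hxm : Function.invFunOn f S (f a) ∈ S := Function.invFunOn_mem ⟨a, ha, rfl⟩
      have hym : Function.invFunOn f S (f b) ∈ S := Function.invFunOn_mem ⟨b, hb, rfl⟩
      have h2 : Function.invFunOn f S (f a) = Function.invFunOn f S (f b) :=
        hginjS hxm hym hxy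
      rw [← Function.invFunOn_eq (f := f) ⟨a, ha, rfl⟩,
        ← Function.invFunOn_eq (f := f) ⟨b, hb, rfl⟩, h2]
    have hT : f '' S ∈ Ultrafilter.map f u := by
      rw [Ultrafilter.mem_map]
      exact Filter.mem_of_superset hSu (Set.subset_preimage_image f S)
    have hkf : ∀ n ∈ S, k (f n) = g n := by
      intro n hn
      simp only [hkdef]
      rw [hfinjS.leftInvOn_invFunOn hn]
    have hmapcongr : Ultrafilter.map (k ∘ f) u = Ultrafilter.map g u := by
      apply Ultrafilter.coe_injective
      rw [Ultrafilter.coe_map, Ultrafilter.coe_map]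
      apply Filter.map_congr
      exact Filter.eventually_iff_exists_mem.mpr ⟨S, hSu, fun n hn => hkf n hn⟩
    have hmap : Ultrafilter.map k (Ultrafilter.map f u) = Ultrafilter.map f u := by
      rw [Ultrafilter.map_map, hmapcongr, ← heq u hufree]
    have hfix := fixed_mem (Ultrafilter.map f u) k (f '' S) hT hTinj hmap
    have hpre : f ⁻¹' {m | k m = m} ∈ u := hfix
    obtain ⟨n, hnS, hnfix⟩ := Ultrafilter.nonempty_of_mem (u.inter_mem hSu hpre)
    have : k (f n) = f n := hnfix
    rw [hkf n hnS] at this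
    exact hnS.2 this.symm
  -- Step 2: the set E where f = g (inside A ∩ C) is cofinite
  set E : Set ℕ := A ∩ C ∩ {n | f n = g n} with hEdef
  have hEcfin : Eᶜ.Finite := by
    apply Set.Finite.subset (((hA.union hC).union hSfin))
    intro n hn
    simp only [hEdef, Set.mem_compl_iff, Set.mem_inter_iff, Set.mem_setOf_eq, not_and] at hn
    by_cases hnA : n ∈ A
    · by_cases hnC : n ∈ C
      · exact Or.inr ⟨⟨hnA, hnC⟩, hn ⟨hnA, hnC⟩⟩
      · exact Or.inl (Or.inr hnC)
    · exact Or.inl (Or.inl hnA)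
  have hEA : E ⊆ A := fun n hn => hn.1.1
  have hEC : E ⊆ C := fun n hn => hn.1.2
  have himg : f '' E = g '' E :=
    Set.image_congr (fun n hn => hn.2)
  have h1 := count_lemma f A B E hA hB hEcfin hEA hf
  have h2 := count_lemma g C D E hC hD hEcfin hEC hg
  rw [h1, h2, himg]
end

section
/- For bijections φ and ψ between cofinite subsets of ℕ, the composition ψ ∘ φ (defined on the cofinite set φ⁻¹(dom ψ ∩ ran φ)) is again a bijection between cofinite subsets of ℕ, and h(ψ ∘ φ) = h(ψ) + h(φ), where h(φ) = |ℕ \ ran φ| − |ℕ \ dom φ|. -/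
/-- Key lemma: restricting a bijection between cofinite sets to a cofinite
subset preserves cofiniteness of the image and the defect `h`. -/
lemma key_restrict (f : ℕ → ℕ) (A B A' : Set ℕ) (hA : Aᶜ.Finite) (hB : Bᶜ.Finite)
    (hf : Set.BijOn f A B) (hsub : A' ⊆ A) (hA' : A'ᶜ.Finite) :
    ((f '' A')ᶜ).Finite ∧
    ((f '' A')ᶜ.ncard : ℤ) - (A'ᶜ.ncard : ℤ) = (Bᶜ.ncard : ℤ) - (Aᶜ.ncard : ℤ) := by
  have hdiff_sub : A \ A' ⊆ A'ᶜ := fun x hx => hx.2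
  have hdiff_fin : (A \ A').Finite := hA'.subset hdiff_sub
  have himg_sub : f '' A' ⊆ B := by
    rw [← hf.image_eq]; exact Set.image_mono (f := f) hsub
  have hBdiff : B \ f '' A' = f '' (A \ A') := by
    rw [← hf.image_eq, Set.InjOn.image_diff hf.injOn, Set.inter_eq_right.mpr hsub]
  have hcompl : (f '' A')ᶜ = Bᶜ ∪ (B \ f '' A') := by
    ext x
    simp only [Set.mem_compl_iff, Set.mem_union, Set.mem_diff]
    constructor
    · intro h; by_cases hb : x ∈ B
      · exact Or.inr ⟨hb, h⟩
      · exact Or.inl hb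
    · rintro (h | ⟨_, h⟩) hx
      · exact h (himg_sub hx)
      · exact h hx
  have hBdiff_fin : (B \ f '' A').Finite := by
    rw [hBdiff]; exact hdiff_fin.image f
  have hfin : ((f '' A')ᶜ).Finite := by
    rw [hcompl]; exact hB.union hBdiff_fin
  refine ⟨hfin, ?_⟩
  have hAcompl : A'ᶜ = Aᶜ ∪ (A \ A') := by
    ext x
    simp only [Set.mem_compl_iff, Set.mem_union, Set.mem_diff]
    constructor
    · intro h; by_cases ha : x ∈ A
      · exact Or.inr ⟨ha, h⟩
      · exact Or.inl ha
    · rintro (h | ⟨_, h⟩) hx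
      · exact h (hsub hx)
      · exact h hx
  have hd1 : Disjoint Bᶜ (B \ f '' A') := by
    rw [Set.disjoint_left]; intro x hx ⟨hb, _⟩; exact hx hb
  have hd2 : Disjoint Aᶜ (A \ A') := by
    rw [Set.disjoint_left]; intro x hx ⟨ha, _⟩; exact hx ha
  have hcard1 : (f '' A')ᶜ.ncard = Bᶜ.ncard + (B \ f '' A').ncard := by
    rw [hcompl]; exact Set.ncard_union_eq hd1 hB hBdiff_fin
  have hcard2 : A'ᶜ.ncard = Aᶜ.ncard + (A \ A').ncard := by
    rw [hAcompl]; exact Set.ncard_union_eq hd2 hA hdiff_fin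
  have hcard3 : (B \ f '' A').ncard = (A \ A').ncard := by
    rw [hBdiff]
    exact Set.ncard_image_of_injOn (hf.injOn.mono Set.diff_subset)
  rw [hcard1, hcard2, hcard3]
  push_cast
  ring

/-- For bijections φ : A → B and ψ : C → D between cofinite subsets of ℕ,
the composition ψ ∘ φ, defined on the cofinite set A ∩ φ⁻¹(C) (= φ⁻¹(dom ψ ∩ ran φ)),
is again a bijection between cofinite subsets of ℕ, and h(ψ ∘ φ) = h(ψ) + h(φ),
where h(φ) = |ℕ \ ran φ| − |ℕ \ dom φ|. -/
theorem comp_cofinite_bij_and_h_additive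
    (f g : ℕ → ℕ) (A B C D : Set ℕ)
    (hA : Aᶜ.Finite) (hB : Bᶜ.Finite) (hC : Cᶜ.Finite) (hD : Dᶜ.Finite)
    (hf : Set.BijOn f A B) (hg : Set.BijOn g C D) :
    ((A ∩ f ⁻¹' C)ᶜ).Finite ∧
    ((g '' (B ∩ C))ᶜ).Finite ∧
    Set.BijOn (g ∘ f) (A ∩ f ⁻¹' C) (g '' (B ∩ C)) ∧
    ((g '' (B ∩ C))ᶜ.ncard : ℤ) - ((A ∩ f ⁻¹' C)ᶜ.ncard : ℤ) =
      ((Dᶜ.ncard : ℤ) - (Cᶜ.ncard : ℤ)) + ((Bᶜ.ncard : ℤ) - (Aᶜ.ncard : ℤ)) := by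
  set A' := A ∩ f ⁻¹' C with hA'def
  have hsub : A' ⊆ A := Set.inter_subset_left
  -- A'ᶜ is finite
  have hbad_fin : (A ∩ f ⁻¹' Cᶜ).Finite := by
    have himg : f '' (A ∩ f ⁻¹' Cᶜ) ⊆ Cᶜ := by
      rintro y ⟨x, ⟨_, hx⟩, rfl⟩; exact hx
    exact Set.Finite.of_finite_image (hC.subset himg)
      (hf.injOn.mono Set.inter_subset_left)
  have hA'fin : (A'ᶜ).Finite := by
    have : A'ᶜ ⊆ Aᶜ ∪ (A ∩ f ⁻¹' Cᶜ) := by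
      intro x hx
      by_cases ha : x ∈ A
      · right
        refine ⟨ha, ?_⟩
        intro hc
        exact hx ⟨ha, hc⟩
      · left; exact ha
    exact (hA.union hbad_fin).subset this
  -- f '' A' = B ∩ C
  have himgA' : f '' A' = B ∩ C := by
    apply Set.Subset.antisymm
    · rintro y ⟨x, ⟨hxA, hxC⟩, rfl⟩
      exact ⟨hf.mapsTo hxA, hxC⟩
    · rintro y ⟨hyB, hyC⟩
      obtain ⟨x, hxA, rfl⟩ := hf.surjOn hyB
      exact ⟨x, ⟨hxA, hyC⟩, rfl⟩
  obtain ⟨hBCfin, heq1⟩ := key_restrict f A B A' hA hB hf hsub hA'fin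
  rw [himgA'] at hBCfin heq1
  obtain ⟨hfin2, heq2⟩ := key_restrict g C D (B ∩ C) hC hD hg Set.inter_subset_right hBCfin
  refine ⟨hA'fin, hfin2, ?_, by linarith⟩
  have hf1 : Set.BijOn f A' (B ∩ C) := by
    refine ⟨Set.mapsTo_iff_image_subset.mpr himgA'.subset, hf.injOn.mono hsub, ?_⟩
    rw [← himgA']
    exact Set.surjOn_image f A'
  have hg1 : Set.BijOn g (B ∩ C) (g '' (B ∩ C)) :=
    ⟨Set.mapsTo_image g (B ∩ C), hg.injOn.mono Set.inter_subset_right,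
      Set.surjOn_image g (B ∩ C)⟩
  exact hg1.comp hf1
end

section
/- The map h from the group Triv of trivial autohomeomorphisms of ℕ* to ℤ, defined by h(φ*) = |ℕ \ ran φ| − |ℕ \ dom φ| for any bijection φ between cofinite subsets of ℕ representing φ*, is a well-defined surjective group homomorphism. -/
/-- The space ℕ* : free ultrafilters on ℕ. -/
abbrev FreeUF : Type := {u : Ultrafilter ℕ // (u : Filter ℕ) ≤ Filter.cofinite}

/-- A bijection of ℕ* is trivial if it is induced by a bijection between
cofinite subsets of ℕ (represented by a total function). -/
def IsTrivial (e : Equiv.Perm FreeUF) : Prop :=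
  ∃ (f : ℕ → ℕ) (A B : Set ℕ), Aᶜ.Finite ∧ Bᶜ.Finite ∧ Set.BijOn f A B ∧
    ∀ u : FreeUF, ((e u : FreeUF) : Ultrafilter ℕ) = Ultrafilter.map f (u : Ultrafilter ℕ)

open Set Filter

/-- Preimage of a finite set intersected with a set of injectivity is finite. -/
lemma preimage_inter_finite {f : ℕ → ℕ} {A s : Set ℕ} (hinj : Set.InjOn f A)
    (hs : s.Finite) : (f ⁻¹' s ∩ A).Finite := by
  apply Set.Finite.of_finite_image (hs.subset _) (hinj.mono inter_subset_right)
  rintro _ ⟨x, ⟨hx, _⟩, rfl⟩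
  exact hx

/-- The image of a free ultrafilter under a map injective on a cofinite set is free. -/
lemma map_free {f : ℕ → ℕ} {A : Set ℕ} (hA : Aᶜ.Finite) (hinj : Set.InjOn f A)
    {u : Ultrafilter ℕ} (hu : (u : Filter ℕ) ≤ Filter.cofinite) :
    ((Ultrafilter.map f u : Ultrafilter ℕ) : Filter ℕ) ≤ Filter.cofinite := by
  rw [Filter.le_cofinite_iff_compl_singleton_mem]
  intro x
  have h1 : (f ⁻¹' {x}).Finite := by
    refine ((preimage_inter_finite hinj (Set.finite_singleton x)).union hA).subset ?_
    intro n hn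
    by_cases h : n ∈ A
    · exact Or.inl ⟨hn, h⟩
    · exact Or.inr h
  have h2 : (f ⁻¹' {x})ᶜ ∈ u := hu h1.compl_mem_cofinite
  have h3 : {x}ᶜ ∈ Ultrafilter.map f u := by
    rw [Ultrafilter.mem_map, Set.preimage_compl]
    exact h2
  exact h3

/-- Every bijection between cofinite sets induces a permutation of ℕ*. -/
lemma exists_perm {f : ℕ → ℕ} {A B : Set ℕ} (hA : Aᶜ.Finite) (hB : Bᶜ.Finite)
    (hbij : Set.BijOn f A B) :
    ∃ e : Equiv.Perm FreeUF,
      ∀ u : FreeUF, ((e u : FreeUF) : Ultrafilter ℕ) = Ultrafilter.map f (u : Ultrafilter ℕ) := by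
  set g := Function.invFunOn f A with hgdef
  have hinv : Set.InvOn g f A B := hbij.invOn_invFunOn
  have hgbij : Set.BijOn g B A := Set.BijOn.symm hinv.symm hbij
  refine ⟨{ toFun := fun u => ⟨Ultrafilter.map f u.1, map_free hA hbij.injOn u.2⟩
            invFun := fun u => ⟨Ultrafilter.map g u.1, map_free hB hgbij.injOn u.2⟩
            left_inv := ?_
            right_inv := ?_ }, fun u => rfl⟩
  · intro u
    apply Subtype.ext
    apply Ultrafilter.coe_injective
    have hAu : A ∈ (u.1 : Filter ℕ) := Filter.le_def.mp u.2 A (Filter.mem_cofinite.mpr hA)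
    show (Ultrafilter.map g (Ultrafilter.map f u.1) : Filter ℕ) = ↑u.1
    rw [Ultrafilter.coe_map, Ultrafilter.coe_map, Filter.map_map]
    have hev : (g ∘ f) =ᶠ[(u.1 : Filter ℕ)] id :=
      Filter.mem_of_superset hAu (fun n hn => hinv.1 hn)
    rw [Filter.map_congr hev, Filter.map_id]
  · intro u
    apply Subtype.ext
    apply Ultrafilter.coe_injective
    have hBu : B ∈ (u.1 : Filter ℕ) := Filter.le_def.mp u.2 B (Filter.mem_cofinite.mpr hB)
    show (Ultrafilter.map f (Ultrafilter.map g u.1) : Filter ℕ) = ↑u.1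
    rw [Ultrafilter.coe_map, Ultrafilter.coe_map, Filter.map_map]
    have hev : (f ∘ g) =ᶠ[(u.1 : Filter ℕ)] id :=
      Filter.mem_of_superset hBu (fun n hn => hinv.2 hn)
    rw [Filter.map_congr hev, Filter.map_id]

/-- Greedy construction: two injective, pointwise different maps on an infinite set
admit an infinite subset with disjoint images. -/
lemma exists_disjoint_images {S : Set ℕ} {f g : ℕ → ℕ} (hS : S.Infinite)
    (hf : Set.InjOn f S) (hg : Set.InjOn g S) (hne : ∀ n ∈ S, f n ≠ g n) :
    ∃ T : Set ℕ, T ⊆ S ∧ T.Infinite ∧ Disjoint (f '' T) (g '' T) := by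
  have key : ∀ F : Finset ℕ, ∃ n, n ∈ S ∧ n ∉ F ∧ ∀ m ∈ F, f n ≠ g m ∧ g n ≠ f m := by
    intro F
    have h1 : (f ⁻¹' (g '' ↑F) ∩ S).Finite :=
      preimage_inter_finite hf (F.finite_toSet.image g)
    have h2 : (g ⁻¹' (f '' ↑F) ∩ S).Finite :=
      preimage_inter_finite hg (F.finite_toSet.image f)
    have h3 : (S \ ((↑F : Set ℕ) ∪ (f ⁻¹' (g '' ↑F) ∩ S) ∪ (g ⁻¹' (f '' ↑F) ∩ S))).Infinite :=
      hS.diff ((F.finite_toSet.union h1).union h2)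
    obtain ⟨n, hnS, hn⟩ := h3.nonempty
    refine ⟨n, hnS, fun h => hn (Or.inl (Or.inl h)), fun m hm => ⟨?_, ?_⟩⟩
    · intro h
      exact hn (Or.inl (Or.inr ⟨⟨m, hm, h.symm⟩, hnS⟩))
    · intro h
      exact hn (Or.inr ⟨⟨m, hm, h.symm⟩, hnS⟩)
  choose pick hpick1 hpick2 hpick3 using key
  let F : ℕ → Finset ℕ := fun k => Nat.rec ∅ (fun _ prev => insert (pick prev) prev) k
  have hFsucc : ∀ k, F (k + 1) = insert (pick (F k)) (F k) := fun _ => rfl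
  have hmono : ∀ k l, k ≤ l → F k ⊆ F l := by
    intro k l hkl
    induction hkl with
    | refl => exact subset_rfl
    | step _ ih => exact ih.trans (by rw [hFsucc]; exact Finset.subset_insert _ _)
  set a : ℕ → ℕ := fun k => pick (F k) with ha
  have haF : ∀ k, a k ∈ F (k + 1) := by
    intro k; rw [hFsucc]; exact Finset.mem_insert_self _ _
  have hinj : Function.Injective a := by
    intro k l hkl
    by_contra hne'
    rcases Nat.lt_or_ge k l with h | h
    · have hm : a k ∈ F l := hmono (k + 1) l h (haF k)
      rw [hkl] at hm
      exact hpick2 (F l) hm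
    · have hlk : l < k := lt_of_le_of_ne h (Ne.symm hne')
      have hm : a l ∈ F k := hmono (l + 1) k hlk (haF l)
      rw [← hkl] at hm
      exact hpick2 (F k) hm
  refine ⟨Set.range a, ?_, Set.infinite_range_of_injective hinj, ?_⟩
  · rintro _ ⟨k, rfl⟩; exact hpick1 (F k)
  · rw [Set.disjoint_left]
    rintro _ ⟨x, ⟨k, rfl⟩, rfl⟩ ⟨y, ⟨l, rfl⟩, hyx⟩
    rcases lt_trichotomy k l with h | h | h
    · exact (hpick3 (F l) (a k) (hmono (k + 1) l h (haF k))).2 hyx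
    · subst h
      exact hne (a k) (hpick1 (F k)) hyx.symm
    · exact (hpick3 (F k) (a l) (hmono (l + 1) k h (haF l))).1 hyx.symm


/-- If two trivial representations induce the same map on ℕ*, they agree on a
cofinite set. -/
lemma agree_cofinite {e : Equiv.Perm FreeUF} {f g : ℕ → ℕ} {A C : Set ℕ}
    (hfinj : Set.InjOn f A) (hginj : Set.InjOn g C)
    (hf : ∀ u : FreeUF, ((e u : FreeUF) : Ultrafilter ℕ) = Ultrafilter.map f (u : Ultrafilter ℕ))
    (hg : ∀ u : FreeUF, ((e u : FreeUF) : Ultrafilter ℕ) = Ultrafilter.map g (u : Ultrafilter ℕ)) :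
    {n | n ∈ A ∩ C ∧ f n ≠ g n}.Finite := by
  by_contra hinf
  replace hinf : {n | n ∈ A ∩ C ∧ f n ≠ g n}.Infinite := hinf
  obtain ⟨T, hTS, hTinf, hTdisj⟩ := exists_disjoint_images hinf
    (hfinj.mono fun n hn => hn.1.1) (hginj.mono fun n hn => hn.1.2) (fun n hn => hn.2)
  haveI : (Filter.cofinite ⊓ 𝓟 T).NeBot := hTinf.cofinite_inf_principal_neBot
  set u0 : Ultrafilter ℕ := Ultrafilter.of (Filter.cofinite ⊓ 𝓟 T) with hu0
  have hle : (u0 : Filter ℕ) ≤ Filter.cofinite := (Ultrafilter.of_le _).trans inf_le_left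
  have hT : T ∈ u0 :=
    Filter.le_def.mp (Ultrafilter.of_le _) T (Filter.mem_inf_of_right (Filter.mem_principal_self T))
  set u : FreeUF := ⟨u0, hle⟩ with hu
  have heq : Ultrafilter.map f u0 = Ultrafilter.map g u0 := (hf u).symm.trans (hg u)
  have h1 : f '' T ∈ Ultrafilter.map f u0 := by
    rw [Ultrafilter.mem_map]
    exact Filter.mem_of_superset hT (Set.subset_preimage_image f T)
  rw [heq, Ultrafilter.mem_map] at h1
  obtain ⟨b, hbT, hb⟩ := Filter.nonempty_of_mem (Filter.inter_mem hT h1)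
  exact Set.disjoint_left.mp hTdisj hb ⟨b, hbT, rfl⟩

/-- The complement of the image of a cofinite subset of the domain is finite. -/
lemma compl_image_finite {f : ℕ → ℕ} {A B E : Set ℕ} (hbij : Set.BijOn f A B)
    (hE : E ⊆ A) (hB : Bᶜ.Finite) (hEc : Eᶜ.Finite) : ((f '' E)ᶜ).Finite := by
  have h4 : (A \ E).Finite := hEc.subset (fun n hn => hn.2)
  refine (hB.union (h4.image f)).subset ?_
  intro y hy
  by_cases h : y ∈ B
  · obtain ⟨x, hxA, rfl⟩ := hbij.surjOn h
    exact Or.inr ⟨x, ⟨hxA, fun hxE => hy ⟨x, hxE, rfl⟩⟩, rfl⟩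
  · exact Or.inl h

/-- Key counting lemma: restricting a bijection to a cofinite subset of the domain
preserves the index. -/
lemma count_aux {f : ℕ → ℕ} {A B E : Set ℕ} (hbij : Set.BijOn f A B) (hE : E ⊆ A)
    (hA : Aᶜ.Finite) (hB : Bᶜ.Finite) (hEc : Eᶜ.Finite) :
    (((f '' E)ᶜ).ncard : ℤ) - (Eᶜ.ncard : ℤ) = (Bᶜ.ncard : ℤ) - (Aᶜ.ncard : ℤ) := by
  have hfEB : f '' E ⊆ B := by
    rw [← hbij.image_eq]; exact Set.image_mono hE
  have himg : f '' (A \ E) = B \ f '' E := by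
    apply Set.Subset.antisymm
    · rintro _ ⟨x, ⟨hxA, hxE⟩, rfl⟩
      refine ⟨hbij.mapsTo hxA, ?_⟩
      rintro ⟨y, hyE, hyx⟩
      exact hxE (hbij.injOn (hE hyE) hxA hyx ▸ hyE)
    · rintro y ⟨hyB, hyn⟩
      obtain ⟨x, hxA, rfl⟩ := hbij.surjOn hyB
      exact ⟨x, ⟨hxA, fun hxE => hyn ⟨x, hxE, rfl⟩⟩, rfl⟩
  have hAE : A \ E = Eᶜ \ Aᶜ := by
    ext n; simp only [Set.mem_diff, Set.mem_compl_iff, not_not]; tauto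
  have hBfE : B \ f '' E = (f '' E)ᶜ \ Bᶜ := by
    ext n; simp only [Set.mem_diff, Set.mem_compl_iff, not_not]; tauto
  have hfEc : ((f '' E)ᶜ).Finite := compl_image_finite hbij hE hB hEc
  have hc1 : (f '' (A \ E)).ncard = (A \ E).ncard :=
    Set.ncard_image_of_injOn (hbij.injOn.mono Set.diff_subset)
  have e1 : (((A \ E)).ncard : ℤ) = (Eᶜ.ncard : ℤ) - (Aᶜ.ncard : ℤ) := by
    rw [hAE]; exact Set.cast_ncard_sdiff (Set.compl_subset_compl.mpr hE) hEc
  have e2 : (((B \ f '' E)).ncard : ℤ) = (((f '' E)ᶜ).ncard : ℤ) - (Bᶜ.ncard : ℤ) := by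
    rw [hBfE]; exact Set.cast_ncard_sdiff (Set.compl_subset_compl.mpr hfEB) hfEc
  rw [himg] at hc1
  have e3 : (((B \ f '' E)).ncard : ℤ) = (((A \ E)).ncard : ℤ) := by exact_mod_cast hc1
  linarith

/-- Well-definedness: two representations of the same trivial map have the same index. -/
lemma wellDef {e : Equiv.Perm FreeUF} {f g : ℕ → ℕ} {A B C D : Set ℕ}
    (hA : Aᶜ.Finite) (hB : Bᶜ.Finite) (hbf : Set.BijOn f A B)
    (hf : ∀ u : FreeUF, ((e u : FreeUF) : Ultrafilter ℕ) = Ultrafilter.map f (u : Ultrafilter ℕ))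
    (hC : Cᶜ.Finite) (hD : Dᶜ.Finite) (hbg : Set.BijOn g C D)
    (hg : ∀ u : FreeUF, ((e u : FreeUF) : Ultrafilter ℕ) = Ultrafilter.map g (u : Ultrafilter ℕ)) :
    (Bᶜ.ncard : ℤ) - (Aᶜ.ncard : ℤ) = (Dᶜ.ncard : ℤ) - (Cᶜ.ncard : ℤ) := by
  have hS : {n | n ∈ A ∩ C ∧ f n ≠ g n}.Finite := agree_cofinite hbf.injOn hbg.injOn hf hg
  set E := (A ∩ C) ∩ {n | f n = g n} with hEdef
  have hEc : Eᶜ.Finite := by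
    refine ((hA.union hC).union hS).subset ?_
    intro n hn
    simp only [hEdef, Set.mem_compl_iff, Set.mem_inter_iff, Set.mem_setOf_eq, not_and] at hn
    by_cases h1 : n ∈ A
    · by_cases h2 : n ∈ C
      · exact Or.inr ⟨⟨h1, h2⟩, hn ⟨h1, h2⟩⟩
      · exact Or.inl (Or.inr h2)
    · exact Or.inl (Or.inl h1)
  have hEA : E ⊆ A := fun n hn => hn.1.1
  have hEC : E ⊆ C := fun n hn => hn.1.2
  have himg : f '' E = g '' E := Set.image_congr fun n hn => hn.2
  have h1 := count_aux hbf hEA hA hB hEc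
  have h2 := count_aux hbg hEC hC hD hEc
  rw [himg] at h1
  linarith

/-- The map h : Triv → ℤ, h(φ*) = |ℕ \ ran φ| − |ℕ \ dom φ| for any
representative φ, is well defined on the trivial autohomeomorphisms of ℕ*, is a
group homomorphism, and is surjective (onto ℤ, with trivial preimages). -/
theorem h_hom_exists :
    ∃ H : Equiv.Perm FreeUF → ℤ,
      (∀ (e : Equiv.Perm FreeUF) (f : ℕ → ℕ) (A B : Set ℕ),
          Aᶜ.Finite → Bᶜ.Finite → Set.BijOn f A B →
          (∀ u : FreeUF, ((e u : FreeUF) : Ultrafilter ℕ) = Ultrafilter.map f (u : Ultrafilter ℕ)) →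
          H e = (Bᶜ.ncard : ℤ) - (Aᶜ.ncard : ℤ)) ∧
      (∀ e₁ e₂ : Equiv.Perm FreeUF, IsTrivial e₁ → IsTrivial e₂ →
          H (e₁ * e₂) = H e₁ + H e₂) ∧
      (∀ k : ℤ, ∃ e : Equiv.Perm FreeUF, IsTrivial e ∧ H e = k) := by
  classical
  set H : Equiv.Perm FreeUF → ℤ := fun e =>
    if h : IsTrivial e then
      ((h.choose_spec.choose_spec.choose)ᶜ.ncard : ℤ) - ((h.choose_spec.choose)ᶜ.ncard : ℤ)
    else 0 with hHdef
  have spec : ∀ (e : Equiv.Perm FreeUF) (f : ℕ → ℕ) (A B : Set ℕ),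
      Aᶜ.Finite → Bᶜ.Finite → Set.BijOn f A B →
      (∀ u : FreeUF, ((e u : FreeUF) : Ultrafilter ℕ) = Ultrafilter.map f (u : Ultrafilter ℕ)) →
      H e = (Bᶜ.ncard : ℤ) - (Aᶜ.ncard : ℤ) := by
    intro e f A B hA hB hb hu
    have ht : IsTrivial e := ⟨f, A, B, hA, hB, hb, hu⟩
    simp only [hHdef]
    rw [dif_pos ht]
    obtain ⟨h1, h2, h3, h4⟩ := ht.choose_spec.choose_spec.choose_spec
    exact wellDef h1 h2 h3 h4 hA hB hb hu
  refine ⟨H, spec, ?_, ?_⟩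
  · rintro e₁ e₂ ⟨f, A, B, hA, hB, hbf, hfu⟩ ⟨g, C, D, hC, hD, hbg, hgu⟩
    set E := C ∩ g ⁻¹' A with hEdef
    have hEC : E ⊆ C := inter_subset_left
    have hgE : g '' E = D ∩ A := by
      apply Set.Subset.antisymm
      · rintro _ ⟨x, ⟨hxC, hxA⟩, rfl⟩
        exact ⟨hbg.mapsTo hxC, hxA⟩
      · rintro y ⟨hyD, hyA⟩
        obtain ⟨x, hxC, rfl⟩ := hbg.surjOn hyD
        exact ⟨x, ⟨hxC, hyA⟩, rfl⟩
    have hEc : Eᶜ.Finite := by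
      have h1 : (g ⁻¹' Aᶜ ∩ C).Finite := preimage_inter_finite hbg.injOn hA
      refine (hC.union h1).subset ?_
      intro n hn
      rw [hEdef, Set.mem_compl_iff, Set.mem_inter_iff, not_and] at hn
      by_cases h : n ∈ C
      · exact Or.inr ⟨hn h, h⟩
      · exact Or.inl h
    have hDAc : ((D ∩ A)ᶜ).Finite := by rw [Set.compl_inter]; exact hD.union hA
    have hbgE : Set.BijOn g E (D ∩ A) := by
      have h := (hbg.injOn.mono hEC).bijOn_image
      rwa [hgE] at h
    have hbfg : Set.BijOn (f ∘ g) E (f '' (D ∩ A)) :=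
      ((hbf.injOn.mono inter_subset_right).bijOn_image).comp hbgE
    have hfDAc : ((f '' (D ∩ A))ᶜ).Finite :=
      compl_image_finite hbf inter_subset_right hB hDAc
    have hmul : ∀ u : FreeUF, (((e₁ * e₂) u : FreeUF) : Ultrafilter ℕ)
        = Ultrafilter.map (f ∘ g) (u : Ultrafilter ℕ) := by
      intro u
      have h1 : ((e₁ * e₂) u) = e₁ (e₂ u) := rfl
      rw [h1, hfu (e₂ u), hgu u, Ultrafilter.map_map]
    have h12 := spec (e₁ * e₂) (f ∘ g) E (f '' (D ∩ A)) hEc hfDAc hbfg hmul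
    have h1 := spec e₁ f A B hA hB hbf hfu
    have h2 := spec e₂ g C D hC hD hbg hgu
    have c1 := count_aux hbf (inter_subset_right : D ∩ A ⊆ A) hA hB hDAc
    have c2 := count_aux hbg hEC hC hD hEc
    rw [hgE] at c2
    rw [h12, h1, h2]
    linarith
  · intro k
    obtain ⟨n, rfl | rfl⟩ := Int.eq_nat_or_neg k
    · have hbij : Set.BijOn (· + n) Set.univ {m : ℕ | n ≤ m} := by
        refine ⟨fun m _ => Nat.le_add_left n m, fun a _ b _ h => by
          have h' : a + n = b + n := h; omega, ?_⟩
        intro y hy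
        simp only [Set.mem_setOf_eq] at hy
        exact ⟨y - n, trivial, by show y - n + n = y; omega⟩
      have hA : (Set.univ : Set ℕ)ᶜ.Finite := by simp
      have hB : ({m : ℕ | n ≤ m} : Set ℕ)ᶜ.Finite := by
        have h : ({m : ℕ | n ≤ m} : Set ℕ)ᶜ = Set.Iio n := by
          ext m
          simp only [Set.mem_compl_iff, Set.mem_setOf_eq, Set.mem_Iio]
          omega
        rw [h]; exact Set.finite_Iio n
      obtain ⟨e, he⟩ := exists_perm hA hB hbij
      refine ⟨e, ⟨_, _, _, hA, hB, hbij, he⟩, ?_⟩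
      rw [spec e _ _ _ hA hB hbij he]
      have h1 : ({m : ℕ | n ≤ m} : Set ℕ)ᶜ.ncard = n := by
        have h : ({m : ℕ | n ≤ m} : Set ℕ)ᶜ = Set.Iio n := by
          ext m
          simp only [Set.mem_compl_iff, Set.mem_setOf_eq, Set.mem_Iio]
          omega
        rw [h, ← Finset.coe_Iio, Set.ncard_coe_finset, Nat.card_Iio]
      have h2 : ((Set.univ : Set ℕ))ᶜ.ncard = 0 := by simp
      rw [h1, h2]
      simp
    · have hbij : Set.BijOn (· - n) {m : ℕ | n ≤ m} Set.univ := by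
        refine ⟨fun m _ => trivial, fun a ha b hb h => ?_, ?_⟩
        · simp only [Set.mem_setOf_eq] at ha hb
          have h' : a - n = b - n := h
          omega
        · intro y _
          exact ⟨y + n, by show n ≤ y + n; omega, by show y + n - n = y; omega⟩
      have hA : ({m : ℕ | n ≤ m} : Set ℕ)ᶜ.Finite := by
        have h : ({m : ℕ | n ≤ m} : Set ℕ)ᶜ = Set.Iio n := by
          ext m
          simp only [Set.mem_compl_iff, Set.mem_setOf_eq, Set.mem_Iio]
          omega
        rw [h]; exact Set.finite_Iio n
      have hB : (Set.univ : Set ℕ)ᶜ.Finite := by simp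
      obtain ⟨e, he⟩ := exists_perm hA hB hbij
      refine ⟨e, ⟨_, _, _, hA, hB, hbij, he⟩, ?_⟩
      rw [spec e _ _ _ hA hB hbij he]
      have h1 : ({m : ℕ | n ≤ m} : Set ℕ)ᶜ.ncard = n := by
        have h : ({m : ℕ | n ≤ m} : Set ℕ)ᶜ = Set.Iio n := by
          ext m
          simp only [Set.mem_compl_iff, Set.mem_setOf_eq, Set.mem_Iio]
          omega
        rw [h, ← Finset.coe_Iio, Set.ncard_coe_finset, Nat.card_Iio]
      have h2 : ((Set.univ : Set ℕ))ᶜ.ncard = 0 := by simp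
      rw [h1, h2]
      simp
end

section
/- If a trivial autohomeomorphism φ* of ℕ* is induced by a permutation of ℕ (i.e., φ can be chosen with dom φ = ran φ = ℕ), then h(φ*) = 0. Consequently, the shift n ↦ n+1 on ℕ and its inverse induce autohomeomorphisms of ℕ* that are not induced by any permutation of ℕ. -/
section aux

/-- Greedy construction: given `g` injective on `A ⊇ D`, `D` infinite, `g n ≠ n` on `D`,
there is an infinite `E ⊆ D` with `E ∩ g '' E = ∅`. -/
lemma exists_free_set (g : ℕ → ℕ) (A D : Set ℕ) (hDA : D ⊆ A) (hD : D.Infinite)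
    (hg : Set.InjOn g A) (hne : ∀ n ∈ D, g n ≠ n) :
    ∃ E : Set ℕ, E ⊆ D ∧ E.Infinite ∧ ∀ m ∈ E, ∀ n ∈ E, g n ≠ m := by
  classical
  set S : ℕ → Set ℕ := fun k =>
    Nat.rec (∅ : Set ℕ) (fun _ s => insert (sInf (D \ (s ∪ g '' s ∪ g ⁻¹' s))) s) k with hS
  have hSsucc : ∀ k, S (k+1) = insert (sInf (D \ (S k ∪ g '' S k ∪ g ⁻¹' S k))) (S k) :=
    fun k => rfl
  set e : ℕ → ℕ := fun k => sInf (D \ (S k ∪ g '' S k ∪ g ⁻¹' S k)) with he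
  -- S k finite and ⊆ D
  have hfin : ∀ k, (S k).Finite ∧ S k ⊆ D := by
    intro k
    induction k with
    | zero => exact ⟨Set.finite_empty, Set.empty_subset _⟩
    | succ k ih =>
      rw [hSsucc]
      have hpre : (D ∩ g ⁻¹' S k).Finite := by
        apply Set.Finite.of_finite_image (f := g)
        · exact (ih.1.subset (by intro x hx; rcases hx with ⟨y, ⟨_, hy⟩, rfl⟩; exact hy))
        · exact hg.mono (fun x hx => hDA hx.1)
      have hinf : (D \ (S k ∪ g '' S k ∪ g ⁻¹' S k)).Infinite := by
        have : D \ (S k ∪ g '' S k ∪ g ⁻¹' S k)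
            = D \ (S k ∪ g '' S k ∪ (D ∩ g ⁻¹' S k)) := by
          ext x; simp only [Set.mem_diff, Set.mem_union, Set.mem_inter_iff]; tauto
        rw [this]
        exact hD.diff ((ih.1.union (ih.1.image g)).union hpre)
      have hmem : e k ∈ D \ (S k ∪ g '' S k ∪ g ⁻¹' S k) := Nat.sInf_mem hinf.nonempty
      exact ⟨ih.1.insert _, Set.insert_subset hmem.1 ih.2⟩
  have hemem : ∀ k, e k ∈ D \ (S k ∪ g '' S k ∪ g ⁻¹' S k) := by
    intro k
    have hpre : (D ∩ g ⁻¹' S k).Finite := by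
      apply Set.Finite.of_finite_image (f := g)
      · exact ((hfin k).1.subset (by intro x hx; rcases hx with ⟨y, ⟨_, hy⟩, rfl⟩; exact hy))
      · exact hg.mono (fun x hx => hDA hx.1)
    have hinf : (D \ (S k ∪ g '' S k ∪ g ⁻¹' S k)).Infinite := by
      have : D \ (S k ∪ g '' S k ∪ g ⁻¹' S k)
          = D \ (S k ∪ g '' S k ∪ (D ∩ g ⁻¹' S k)) := by
        ext x; simp only [Set.mem_diff, Set.mem_union, Set.mem_inter_iff]; tauto
      rw [this]
      exact hD.diff (((hfin k).1.union ((hfin k).1.image g)).union hpre)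
    exact Nat.sInf_mem hinf.nonempty
  have hmono : ∀ {i j : ℕ}, i ≤ j → S i ⊆ S j := by
    intro i j hij
    induction j with
    | zero => simp_all
    | succ j ih =>
      rcases Nat.lt_or_ge i (j+1) with h | h
      · have := ih (Nat.lt_succ_iff.mp h)
        rw [hSsucc]; exact this.trans (Set.subset_insert _ _)
      · have : i = j + 1 := le_antisymm hij h
        subst this; rfl
  have heS : ∀ {i j : ℕ}, i < j → e i ∈ S j := by
    intro i j hij
    have : e i ∈ S (i+1) := by rw [hSsucc]; exact Set.mem_insert _ _
    exact hmono hij this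
  have heD : ∀ k, e k ∈ D := fun k => (hemem k).1
  have key : ∀ i j, g (e i) ≠ e j := by
    intro i j
    rcases lt_trichotomy i j with h | h | h
    · -- e i ∈ S j, e j ∉ g '' S j
      intro hc
      exact (hemem j).2 (Or.inl (Or.inr ⟨e i, heS h, hc⟩))
    · subst h; exact hne _ (heD i)
    · -- e j ∈ S i, g (e i) ∉ S i
      intro hc
      exact (hemem i).2 (Or.inr (by simpa [Set.mem_preimage, hc] using heS h))
  have heinj : Function.Injective e := by
    intro i j hij
    by_contra hne'
    rcases Nat.lt_or_ge i j with h | h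
    · exact (hemem j).2 (Or.inl (Or.inl (hij ▸ heS h)))
    · have h : j < i := lt_of_le_of_ne h (Ne.symm hne')
      exact (hemem i).2 (Or.inl (Or.inl (hij ▸ heS h)))
  refine ⟨Set.range e, ?_, Set.infinite_range_of_injective heinj, ?_⟩
  · rintro x ⟨k, rfl⟩; exact heD k
  · rintro m ⟨j, rfl⟩ n ⟨i, rfl⟩; exact key i j

/-- If `map f u = map π u` for all free ultrafilters, then `f = π` cofinitely on `A`. -/
lemma agree_cofinite_s6 (π : Equiv.Perm ℕ) (f : ℕ → ℕ) (A : Set ℕ)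
    (hinj : Set.InjOn f A)
    (hu : ∀ u : Ultrafilter ℕ, IsFreeUF u →
      Ultrafilter.map f u = Ultrafilter.map (⇑π) u) :
    {n | n ∈ A ∧ f n ≠ π n}.Finite := by
  by_contra hD
  replace hD : {n | n ∈ A ∧ f n ≠ π n}.Infinite := hD
  set D := {n | n ∈ A ∧ f n ≠ π n}
  set g : ℕ → ℕ := fun n => π.symm (f n) with hgdef
  have hgInj : Set.InjOn g A := fun x hx y hy hxy =>
    hinj hx hy (π.symm.injective hxy)
  have hgne : ∀ n ∈ D, g n ≠ n := by
    intro n hn hc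
    have : π (g n) = π n := congrArg π hc
    simp only [hgdef, Equiv.apply_symm_apply] at this
    exact hn.2 this
  obtain ⟨E, hED, hEinf, hEfree⟩ :=
    exists_free_set g A D (fun n hn => hn.1) hD hgInj hgne
  have : (Filter.cofinite ⊓ Filter.principal E).NeBot :=
    hEinf.cofinite_inf_principal_neBot
  obtain ⟨u, hu'⟩ := Ultrafilter.exists_le (Filter.cofinite ⊓ Filter.principal E)
  have hufree : IsFreeUF u := hu'.trans inf_le_left
  have hEu : E ∈ u := (hu'.trans inf_le_right) (Filter.mem_principal_self E)
  have hmap := hu u hufree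
  have hπE : π '' E ∈ Ultrafilter.map (⇑π) u := by
    rw [Ultrafilter.mem_map, Set.preimage_image_eq _ π.injective]
    exact hEu
  rw [← hmap, Ultrafilter.mem_map] at hπE
  have hnon : (E ∩ f ⁻¹' (π '' E)).Nonempty :=
    Ultrafilter.nonempty_of_mem (u.inter_mem hEu hπE)
  obtain ⟨n, hnE, hnf⟩ := hnon
  obtain ⟨m, hmE, hmeq⟩ := hnf
  have : g n = m := by simp [hgdef, ← hmeq]
  exact hEfree m hmE n hnE this

/-- Counting: a cofinite bijection agreeing with a permutation cofinitely preserves defect. -/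
lemma card_eq (π : Equiv.Perm ℕ) (f : ℕ → ℕ) (A B : Set ℕ)
    (hA : Aᶜ.Finite) (hB : Bᶜ.Finite) (hbij : Set.BijOn f A B)
    (hF : {n | n ∈ A ∧ f n ≠ π n}.Finite) :
    Bᶜ.ncard = Aᶜ.ncard := by
  classical
  set F := {n | n ∈ A ∧ f n ≠ π n} with hFdef
  have hFA : F ⊆ A := fun n hn => hn.1
  set A' := A \ F with hA'def
  have hagree : ∀ n ∈ A', f n = π n := by
    intro n hn
    by_contra hc
    exact hn.2 ⟨hn.1, hc⟩
  have himeq : f '' A' = π '' A' := by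
    apply Set.image_congr hagree
  -- complements
  have hA'c : A'ᶜ = Aᶜ ∪ F := by
    rw [hA'def]
    ext x
    simp only [Set.mem_compl_iff, Set.mem_diff, Set.mem_union, not_and, not_not]
    constructor
    · intro h
      by_cases hx : x ∈ A
      · exact Or.inr (h hx)
      · exact Or.inl hx
    · rintro (h | h) hx
      · exact absurd hx h
      · exact h
  have hdisj1 : Disjoint Aᶜ F := Set.disjoint_left.mpr (fun x hx hxF => hx (hFA hxF))
  have hcard1 : A'ᶜ.ncard = Aᶜ.ncard + F.ncard := by
    rw [hA'c, Set.ncard_union_eq hdisj1 hA hF]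
  -- image side
  have himA : f '' A = B := hbij.image_eq
  have hAsplit : A = A' ∪ (A ∩ F) := by
    ext x
    simp only [hA'def, Set.mem_union, Set.mem_diff, Set.mem_inter_iff]
    tauto
  have hBsplit : B = f '' A' ∪ f '' (A ∩ F) := by
    rw [← himA]
    conv_lhs => rw [hAsplit]
    rw [Set.image_union]
  have hdisjim : Disjoint (f '' A') (f '' (A ∩ F)) := by
    rw [Set.disjoint_left]
    rintro x ⟨a, ha, rfl⟩ ⟨b, hb, hba⟩
    have : b = a := hbij.injOn hb.1 ha.1 hba
    subst this
    exact ha.2 hb.2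
  have hsub : f '' A' ⊆ B := hBsplit ▸ Set.subset_union_left
  have hcompl : (f '' A')ᶜ = Bᶜ ∪ f '' (A ∩ F) := by
    ext x
    constructor
    · intro hx
      by_cases hxB : x ∈ B
      · rw [hBsplit] at hxB
        rcases hxB with h | h
        · exact absurd h hx
        · exact Or.inr h
      · exact Or.inl hxB
    · rintro (h | h)
      · exact fun hc => h (hsub hc)
      · exact fun hc => (Set.disjoint_left.mp hdisjim hc) h
  have hdisj2 : Disjoint Bᶜ (f '' (A ∩ F)) := by
    rw [Set.disjoint_left]
    intro x hx hx'
    exact hx (hBsplit ▸ Or.inr hx')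
  have hcard2 : (f '' A')ᶜ.ncard = Bᶜ.ncard + F.ncard := by
    rw [hcompl, Set.ncard_union_eq hdisj2 hB (hF.subset Set.inter_subset_right |>.image f)]
    congr 1
    rw [Set.ncard_image_of_injOn (hbij.injOn.mono Set.inter_subset_left)]
    congr 1
    exact Set.inter_eq_right.mpr hFA
  -- permutation side
  have hπcompl : (⇑π '' A')ᶜ = ⇑π '' A'ᶜ := (Set.image_compl_eq π.bijective).symm
  have hcard3 : (f '' A')ᶜ.ncard = A'ᶜ.ncard := by
    rw [himeq, hπcompl, Set.ncard_image_of_injective _ π.injective]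
  omega

end aux

/-- If a trivial autohomeomorphism of ℕ* is induced by a permutation of ℕ,
then h of it is 0 (i.e. any cofinite-bijection representative f : A → B of a
permutation-induced map has |ℕ \ B| = |ℕ \ A|).  Consequently the shift n ↦ n+1 and
its (partial) inverse n ↦ n−1 induce autohomeomorphisms of ℕ* that are not induced by
any permutation of ℕ. -/
theorem perm_induced_h_zero_and_shift_not_perm :
    (∀ (π : Equiv.Perm ℕ) (f : ℕ → ℕ) (A B : Set ℕ),
        Aᶜ.Finite → Bᶜ.Finite → Set.BijOn f A B →
        (∀ u : Ultrafilter ℕ, IsFreeUF u →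
          Ultrafilter.map f u = Ultrafilter.map (⇑π) u) →
        (Bᶜ.ncard : ℤ) - (Aᶜ.ncard : ℤ) = 0) ∧
    (¬ ∃ π : Equiv.Perm ℕ, ∀ u : Ultrafilter ℕ, IsFreeUF u →
        Ultrafilter.map (fun n => n + 1) u = Ultrafilter.map (⇑π) u) ∧
    (¬ ∃ π : Equiv.Perm ℕ, ∀ u : Ultrafilter ℕ, IsFreeUF u →
        Ultrafilter.map (fun n => n - 1) u = Ultrafilter.map (⇑π) u) := by
  have main : ∀ (π : Equiv.Perm ℕ) (f : ℕ → ℕ) (A B : Set ℕ),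
      Aᶜ.Finite → Bᶜ.Finite → Set.BijOn f A B →
      (∀ u : Ultrafilter ℕ, IsFreeUF u →
        Ultrafilter.map f u = Ultrafilter.map (⇑π) u) →
      (Bᶜ.ncard : ℤ) - (Aᶜ.ncard : ℤ) = 0 := by
    intro π f A B hA hB hbij hu
    have hF := agree_cofinite_s6 π f A hbij.injOn hu
    have := card_eq π f A B hA hB hbij hF
    omega
  refine ⟨main, ?_, ?_⟩
  · rintro ⟨π, hπ⟩
    have hbij : Set.BijOn (fun n => n + 1) (Set.univ : Set ℕ) ({0}ᶜ : Set ℕ) := by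
      refine ⟨fun n _ => by simp, fun a _ b _ h => by simpa using h, ?_⟩
      intro m hm
      simp only [Set.mem_compl_iff, Set.mem_singleton_iff] at hm
      exact ⟨m - 1, Set.mem_univ _, show m - 1 + 1 = m by omega⟩
    have := main π (fun n => n + 1) Set.univ ({0}ᶜ)
      (by simp) (by simp) hbij hπ
    rw [compl_compl] at this
    simp [Set.ncard_singleton] at this
  · rintro ⟨π, hπ⟩
    have hbij : Set.BijOn (fun n => n - 1) ({0}ᶜ : Set ℕ) (Set.univ : Set ℕ) := by
      refine ⟨fun n _ => Set.mem_univ _, fun a ha b hb h => ?_, fun m _ => ?_⟩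
      · simp only [Set.mem_compl_iff, Set.mem_singleton_iff] at ha hb
        have h' : a - 1 = b - 1 := h
        omega
      · exact ⟨m + 1, by simp, show m + 1 - 1 = m by omega⟩
    have := main π (fun n => n - 1) ({0}ᶜ) Set.univ
      (by rw [compl_compl]; exact Set.finite_singleton 0) (by simp) hbij hπ
    rw [compl_compl] at this
    simp [Set.ncard_singleton] at this
end

section
/- The shift autohomeomorphism σ* of ℕ* (induced by n ↦ n+1) and its inverse (σ*)⁻¹ are not conjugate in the group Triv of trivial autohomeomorphisms of ℕ*. -/
/-- Greedy chain of finite sets avoiding bad neighborhoods. -/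
noncomputable def chainAux (E : Set ℕ) (bad : ℕ → Set ℕ) (hE : E.Infinite)
    (hbad : ∀ x, (bad x).Finite) : ℕ → Finset ℕ
  | 0 => ∅
  | k+1 =>
      let C := chainAux E bad hE hbad k
      have hfin : ((C : Set ℕ) ∪ ⋃ x ∈ (C : Set ℕ), bad x).Finite :=
        C.finite_toSet.union (C.finite_toSet.biUnion fun x _ => hbad x)
      insert (hE.diff hfin).nonempty.choose C

lemma chainAux_spec (E : Set ℕ) (bad : ℕ → Set ℕ) (hE : E.Infinite)
    (hbad : ∀ x, (bad x).Finite)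
    (hsym : ∀ x ∈ E, ∀ y ∈ E, y ∈ bad x → x ∈ bad y) (k : ℕ) :
    ((chainAux E bad hE hbad k : Set ℕ) ⊆ E) ∧ (chainAux E bad hE hbad k).card = k ∧
      (∀ x ∈ chainAux E bad hE hbad k, ∀ y ∈ chainAux E bad hE hbad k,
        x ≠ y → y ∉ bad x) := by
  induction k with
  | zero => simp [chainAux]
  | succ k ih =>
      obtain ⟨hsub, hcard, hind⟩ := ih
      set C := chainAux E bad hE hbad k with hC
      have hfin : ((C : Set ℕ) ∪ ⋃ x ∈ (C : Set ℕ), bad x).Finite :=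
        C.finite_toSet.union (C.finite_toSet.biUnion fun x _ => hbad x)
      have hz := (hE.diff hfin).nonempty.choose_spec
      set z := (hE.diff hfin).nonempty.choose with hzdef
      have hzE : z ∈ E := hz.1
      have hznC : z ∉ C := fun h => hz.2 (Or.inl h)
      have hznbad : ∀ x ∈ C, z ∉ bad x := by
        intro x hx hzb
        exact hz.2 (Or.inr (Set.mem_biUnion hx hzb))
      have hstep : chainAux E bad hE hbad (k+1) = insert z C := rfl
      refine ⟨?_, ?_, ?_⟩
      · rw [hstep]
        intro x hx
        simp only [Finset.coe_insert, Set.mem_insert_iff] at hx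
        rcases hx with rfl | hx
        · exact hzE
        · exact hsub hx
      · rw [hstep, Finset.card_insert_of_notMem hznC, hcard]
      · rw [hstep]
        intro x hx y hy hxy
        simp only [Finset.mem_insert] at hx hy
        rcases hx with rfl | hx <;> rcases hy with rfl | hy
        · exact absurd rfl hxy
        · intro hyb
          exact hznbad y hy (hsym z hzE y (hsub hy) hyb)
        · exact hznbad x hx
        · exact hind x hx y hy hxy

lemma chainAux_mono (E : Set ℕ) (bad : ℕ → Set ℕ) (hE : E.Infinite)
    (hbad : ∀ x, (bad x).Finite) {j k : ℕ} (h : j ≤ k) :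
    chainAux E bad hE hbad j ⊆ chainAux E bad hE hbad k := by
  induction k with
  | zero => simpa [Nat.le_zero.mp h]
  | succ k ih =>
      rcases Nat.lt_or_ge j (k+1) with h' | h'
      · exact (ih (Nat.lt_succ_iff.mp h')).trans (by
          show chainAux E bad hE hbad k ⊆ _
          exact Finset.subset_insert _ _)
      · have : j = k + 1 := le_antisymm h h'
        simp [this]

/-- Infinite independent set for a symmetric finitary "bad" relation. -/
lemma exists_infinite_indep (E : Set ℕ) (bad : ℕ → Set ℕ) (hE : E.Infinite)
    (hbad : ∀ x, (bad x).Finite)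
    (hsym : ∀ x ∈ E, ∀ y ∈ E, y ∈ bad x → x ∈ bad y) :
    ∃ S : Set ℕ, S ⊆ E ∧ S.Infinite ∧ ∀ x ∈ S, ∀ y ∈ S, x ≠ y → y ∉ bad x := by
  refine ⟨⋃ k, (chainAux E bad hE hbad k : Set ℕ), ?_, ?_, ?_⟩
  · intro x hx
    obtain ⟨k, hk⟩ := Set.mem_iUnion.mp hx
    exact (chainAux_spec E bad hE hbad hsym k).1 hk
  · intro hS
    have h1 : (chainAux E bad hE hbad (hS.toFinset.card + 1) : Finset ℕ) ⊆ hS.toFinset := by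
      intro x hx
      rw [Set.Finite.mem_toFinset]
      exact Set.mem_iUnion.mpr ⟨_, hx⟩
    have := Finset.card_le_card h1
    rw [(chainAux_spec E bad hE hbad hsym _).2.1] at this
    omega
  · intro x hx y hy hxy
    obtain ⟨j, hj⟩ := Set.mem_iUnion.mp hx
    obtain ⟨k, hk⟩ := Set.mem_iUnion.mp hy
    have hx' : x ∈ chainAux E bad hE hbad (max j k) :=
      chainAux_mono E bad hE hbad (le_max_left j k) hj
    have hy' : y ∈ chainAux E bad hE hbad (max j k) :=
      chainAux_mono E bad hE hbad (le_max_right j k) hk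
    exact (chainAux_spec E bad hE hbad hsym _).2.2 x hx' y hy' hxy

/-- A free ultrafilter containing any infinite set. -/
lemma exists_free_uf {S : Set ℕ} (hS : S.Infinite) :
    ∃ u : Ultrafilter ℕ, S ∈ u ∧ (u : Filter ℕ) ≤ Filter.cofinite := by
  have hne : (Filter.cofinite ⊓ Filter.principal S).NeBot := by
    rw [Filter.inf_principal_neBot_iff]
    intro U hU
    have : (S \ Uᶜ).Infinite := hS.diff (Filter.mem_cofinite.mp hU)
    obtain ⟨x, hx⟩ := this.nonempty
    exact ⟨x, by simpa using hx.2, hx.1⟩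
  refine ⟨Ultrafilter.of (Filter.cofinite ⊓ Filter.principal S), ?_, ?_⟩
  · exact (Ultrafilter.of_le _) (Filter.mem_inf_of_right (Filter.mem_principal_self S))
  · exact (Ultrafilter.of_le _).trans inf_le_left

/-- If two maps, injective on cofinite sets, induce the same pushforward on all
free ultrafilters, then they agree cofinitely. -/
lemma disagree_finite (F G : ℕ → ℕ) (AF AG : Set ℕ) (hAF : AFᶜ.Finite) (hAG : AGᶜ.Finite)
    (hFinj : Set.InjOn F AF) (hGinj : Set.InjOn G AG)
    (h : ∀ u : Ultrafilter ℕ, (u : Filter ℕ) ≤ Filter.cofinite →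
      Ultrafilter.map F u = Ultrafilter.map G u) :
    {n | F n ≠ G n}.Finite := by
  by_contra hD
  have hDinf : {n | F n ≠ G n}.Infinite := hD
  set E : Set ℕ := {n | F n ≠ G n} \ (AFᶜ ∪ AGᶜ) with hEdef
  have hE : E.Infinite := hDinf.diff (hAF.union hAG)
  have hEsub : ∀ x ∈ E, F x ≠ G x ∧ x ∈ AF ∧ x ∈ AG := by
    intro x hx
    obtain ⟨h1, h2⟩ := hx
    simp only [Set.mem_union, Set.mem_compl_iff, not_or, not_not] at h2
    exact ⟨h1, h2.1, h2.2⟩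
  set bad : ℕ → Set ℕ := fun x => {m | m ∈ E ∧ (F m = G x ∨ G m = F x)} with hbaddef
  have hbad : ∀ x, (bad x).Finite := by
    intro x
    have h1 : {m | m ∈ E ∧ F m = G x}.Subsingleton := by
      intro a ha b hb
      exact hFinj (hEsub a ha.1).2.1 (hEsub b hb.1).2.1 (ha.2.trans hb.2.symm)
    have h2 : {m | m ∈ E ∧ G m = F x}.Subsingleton := by
      intro a ha b hb
      exact hGinj (hEsub a ha.1).2.2 (hEsub b hb.1).2.2 (ha.2.trans hb.2.symm)
    have : bad x ⊆ {m | m ∈ E ∧ F m = G x} ∪ {m | m ∈ E ∧ G m = F x} := by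
      intro m hm
      rcases hm.2 with h' | h'
      · exact Or.inl ⟨hm.1, h'⟩
      · exact Or.inr ⟨hm.1, h'⟩
    exact (h1.finite.union h2.finite).subset this
  have hsym : ∀ x ∈ E, ∀ y ∈ E, y ∈ bad x → x ∈ bad y := by
    intro x hx y hy hyb
    rcases hyb.2 with h' | h'
    · exact ⟨hx, Or.inr h'.symm⟩
    · exact ⟨hx, Or.inl h'.symm⟩
  obtain ⟨S, hSE, hSinf, hSind⟩ := exists_infinite_indep E bad hE hbad hsym
  obtain ⟨u, hSu, hufree⟩ := exists_free_uf hSinf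
  have hFS : F '' S ∈ Ultrafilter.map F u :=
    Ultrafilter.mem_map.mpr (Filter.mem_of_superset hSu (Set.subset_preimage_image F S))
  have hGS : G '' S ∈ Ultrafilter.map G u :=
    Ultrafilter.mem_map.mpr (Filter.mem_of_superset hSu (Set.subset_preimage_image G S))
  rw [← h u hufree] at hGS
  obtain ⟨v, hv⟩ := Ultrafilter.nonempty_of_mem ((Ultrafilter.map F u).inter_mem hFS hGS)
  obtain ⟨a, haS, haF⟩ := hv.1
  obtain ⟨b, hbS, hbG⟩ := hv.2
  rcases eq_or_ne a b with rfl | hab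
  · exact (hEsub a (hSE haS)).1 (haF.trans hbG.symm)
  · exact hSind a haS b hbS hab ⟨hSE hbS, Or.inr (hbG.trans haF.symm)⟩

/-- The shift autohomeomorphism σ* of ℕ* (induced by n ↦ n+1) and its
inverse (σ*)⁻¹ are not conjugate in the group Triv of trivial autohomeomorphisms. -/
theorem shift_not_conjugate_to_inverse_in_Triv
    (s : Equiv.Perm FreeUF)
    (hs : ∀ u : FreeUF, ((s u : FreeUF) : Ultrafilter ℕ) =
      Ultrafilter.map (fun n => n + 1) (u : Ultrafilter ℕ)) :
    ¬ ∃ t : Equiv.Perm FreeUF, IsTrivial t ∧ t⁻¹ * s * t = s⁻¹ := by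
  rintro ⟨t, ⟨f, A, B, hA, hB, hbij, ht⟩, hconj⟩
  set p : ℕ → ℕ := fun n => n - 1 with hp
  -- pushforward along p preserves freeness
  have hpfree : ∀ u : Ultrafilter ℕ, (u : Filter ℕ) ≤ Filter.cofinite →
      ((Ultrafilter.map p u : Ultrafilter ℕ) : Filter ℕ) ≤ Filter.cofinite := by
    intro u hu S hS
    rw [Ultrafilter.coe_map, Filter.mem_map]
    apply hu
    rw [Filter.mem_cofinite] at hS ⊢
    have hsub : (p ⁻¹' S)ᶜ ⊆ {0} ∪ (fun m => m + 1) '' Sᶜ := by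
      intro n hn
      rcases Nat.eq_zero_or_pos n with rfl | hpos
      · exact Or.inl rfl
      · exact Or.inr ⟨n - 1, hn, by simp; omega⟩
    exact (((Set.finite_singleton 0).union (hS.image _)).subset hsub)
  -- action of s⁻¹
  have hsinv : ∀ u : FreeUF, ((s⁻¹ u : FreeUF) : Ultrafilter ℕ) =
      Ultrafilter.map p (u : Ultrafilter ℕ) := by
    intro u
    have hw : ((Ultrafilter.map p (u : Ultrafilter ℕ) : Ultrafilter ℕ) : Filter ℕ) ≤
        Filter.cofinite := hpfree _ u.2
    set w : FreeUF := ⟨Ultrafilter.map p (u : Ultrafilter ℕ), hw⟩ with hwdef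
    have hsw : s w = u := by
      apply Subtype.ext
      rw [hs w]
      show Ultrafilter.map (fun n => n + 1) (Ultrafilter.map p (u : Ultrafilter ℕ)) =
        (u : Ultrafilter ℕ)
      rw [Ultrafilter.map_map]
      apply Ultrafilter.coe_injective
      rw [Ultrafilter.coe_map]
      have hev : ((fun n => n + 1) ∘ p) =ᶠ[((u : Ultrafilter ℕ) : Filter ℕ)] (id : ℕ → ℕ) := by
        have hmem : {n : ℕ | n ≠ 0} ∈ Filter.cofinite := by
          rw [Filter.mem_cofinite]
          convert Set.finite_singleton 0 using 1
          ext n; simp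
        filter_upwards [u.2 hmem] with n hn
        simp only [Function.comp, hp, id]
        omega
      rw [Filter.map_congr hev, Filter.map_id]
    have hw2 : s⁻¹ u = w := by rw [← hsw, Equiv.Perm.inv_def, Equiv.symm_apply_apply]
    rw [hw2]
  -- rearrange the conjugacy equation
  have h2 : s * t = t * s⁻¹ := by
    calc s * t = t * (t⁻¹ * s * t) := by group
    _ = t * s⁻¹ := by rw [hconj]
  have hst : ∀ u : FreeUF, s (t u) = t (s⁻¹ u) := by
    intro u
    have h3 := congrArg (fun e : Equiv.Perm FreeUF => e u) h2
    simpa [Equiv.Perm.mul_apply] using h3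
  -- translate to ultrafilter maps
  have hkey : ∀ u : Ultrafilter ℕ, (u : Filter ℕ) ≤ Filter.cofinite →
      Ultrafilter.map (fun n => f n + 1) u = Ultrafilter.map (fun n => f (n - 1)) u := by
    intro u hu
    have hc := congrArg Subtype.val (hst ⟨u, hu⟩)
    rw [hs (t ⟨u, hu⟩), ht ⟨u, hu⟩, ht (s⁻¹ ⟨u, hu⟩), hsinv ⟨u, hu⟩,
      Ultrafilter.map_map, Ultrafilter.map_map] at hc
    exact hc
  -- the two functions agree cofinitely
  have hfin : {n | (fun n => f n + 1) n ≠ (fun n => f (n - 1)) n}.Finite := by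
    apply disagree_finite (fun n => f n + 1) (fun n => f (n - 1)) A {n | 1 ≤ n ∧ n - 1 ∈ A}
      hA ?_ ?_ ?_ hkey
    · have hsub : {n : ℕ | 1 ≤ n ∧ n - 1 ∈ A}ᶜ ⊆ {0} ∪ (fun m => m + 1) '' Aᶜ := by
        intro n hn
        simp only [Set.mem_compl_iff, Set.mem_setOf_eq, not_and_or, not_le] at hn
        rcases hn with h' | h'
        · left; simp; omega
        · rcases Nat.eq_zero_or_pos n with rfl | hpos
          · exact Or.inl rfl
          · exact Or.inr ⟨n - 1, h', by show n - 1 + 1 = n; omega⟩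
      exact ((Set.finite_singleton 0).union (hA.image _)).subset hsub
    · intro a ha b hb hab
      have hab' : f a + 1 = f b + 1 := hab
      exact hbij.injOn ha hb (by omega)
    · intro a ha b hb hab
      have hab' : f (a - 1) = f (b - 1) := hab
      have := hbij.injOn ha.2 hb.2 hab'
      have h1 : 1 ≤ a := ha.1
      have h2 : 1 ≤ b := hb.1
      omega
  -- hence f decreases forever: contradiction
  obtain ⟨N, hN⟩ := hfin.bddAbove
  have hgood : ∀ n, N + 1 ≤ n → f n + 1 = f (n - 1) := by
    intro n hn
    by_contra hc
    have hmem : n ∈ {n : ℕ | (fun n => f n + 1) n ≠ (fun n => f (n - 1)) n} := hc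
    have := hN hmem
    omega
  have key : ∀ k, f (N + 1) = f (N + 1 + k) + k := by
    intro k
    induction k with
    | zero => simp
    | succ k ih =>
        have h1 : f (N + 1 + k + 1) + 1 = f (N + 1 + k) := by
          have := hgood (N + 1 + k + 1) (by omega)
          simpa using this
        rw [show N + 1 + (k + 1) = N + 1 + k + 1 from rfl]
        omega
  have := key (f (N + 1) + 1)
  omega
end

section
/- If two permutations φ and ψ of ℕ all of whose orbits are finite induce autohomeomorphisms φ* and ψ* that are conjugate in Triv, and if κₙ, λₙ denote respectively the number of n-cycles of φ and ψ (n ≥ 1), then κₙ = λₙ for all but finitely many n, and for every n, κₙ is infinite if and only if λₙ is infinite. -/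
open Cardinal

/-- The number of n-cycles (orbits of size n) of a permutation of ℕ. -/
noncomputable def nCycles (π : Equiv.Perm ℕ) (n : ℕ) : Cardinal :=
  #{S : Set ℕ // (∃ a : ℕ, S = {b | π.SameCycle a b}) ∧ S.ncard = n}

namespace ConjTrivAux

lemma orbit_eq_of_mem {π : Equiv.Perm ℕ} {a x : ℕ} (h : π.SameCycle a x) :
    {b | π.SameCycle a b} = {b | π.SameCycle x b} := by
  ext b; exact ⟨fun hb => h.symm.trans hb, fun hb => h.trans hb⟩

lemma zpow_diff_eq {π : Equiv.Perm ℕ} {a : ℕ} {i j : ℤ} (hij : (π ^ i) a = (π ^ j) a) :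
    (π ^ (j - i)) a = a := by
  have h1 : (π ^ (j - i)) a = (π ^ (-i)) ((π ^ j) a) := by
    rw [← Equiv.Perm.mul_apply, ← zpow_add, sub_eq_neg_add]
  rw [h1, ← hij, ← Equiv.Perm.mul_apply, ← zpow_add, neg_add_cancel, zpow_zero,
    Equiv.Perm.one_apply]

lemma exists_pos_pow_eq {π : Equiv.Perm ℕ} {a : ℕ}
    (h : {b | π.SameCycle a b}.Finite) : ∃ m : ℕ, 0 < m ∧ (π ^ m) a = a := by
  by_contra hcon
  push_neg at hcon
  have hfix : ∀ d : ℤ, (π ^ d) a = a → d = 0 := by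
    intro d hd
    by_contra hd0
    have habs : (π ^ (d.natAbs : ℤ)) a = a := by
      rcases le_or_gt 0 d with hle | hlt
      · rwa [Int.natAbs_of_nonneg hle]
      · have : (π ^ (0 - d)) a = a := zpow_diff_eq (i := d) (j := 0) (by rw [hd, zpow_zero]; rfl)
        rw [zero_sub] at this
        rwa [Int.ofNat_natAbs_of_nonpos hlt.le]
    rw [zpow_natCast] at habs
    exact hcon d.natAbs (by positivity) habs
  have hinj : Function.Injective (fun k : ℤ => (π ^ k) a) := by
    intro i j hij
    have := hfix (j - i) (zpow_diff_eq hij)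
    omega
  exact (Set.infinite_of_injective_forall_mem hinj
    (fun k => show (π ^ k) a ∈ {b | π.SameCycle a b} from ⟨k, rfl⟩)) h

lemma orbit_eq_range {π : Equiv.Perm ℕ} {a : ℕ} {m : ℕ} (hm : 0 < m) (hma : (π ^ m) a = a) :
    {b | π.SameCycle a b} = Set.range (fun k : ℕ => (π ^ k) a) := by
  ext b
  constructor
  · rintro ⟨i, rfl⟩
    refine ⟨(i % (m : ℤ)).toNat, ?_⟩
    have hm0 : (0:ℤ) < (m:ℤ) := by exact_mod_cast hm
    have hr : (((i % (m:ℤ)).toNat : ℤ)) = i % (m:ℤ) :=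
      Int.toNat_of_nonneg (Int.emod_nonneg i (by omega))
    have hfixm : (π ^ ((m:ℤ))) a = a := by rw [zpow_natCast]; exact hma
    have hfix : (π ^ ((m:ℤ) * (i / (m:ℤ)))) a = a := by
      rw [zpow_mul]
      exact Equiv.Perm.zpow_apply_eq_self_of_apply_eq_self hfixm (i / (m:ℤ))
    calc (π ^ ((i % (m:ℤ)).toNat)) a
        = (π ^ (i % (m:ℤ))) a := by rw [← zpow_natCast, hr]
      _ = (π ^ (i % (m:ℤ))) ((π ^ ((m:ℤ) * (i / (m:ℤ)))) a) := by rw [hfix]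
      _ = (π ^ (i % (m:ℤ) + (m:ℤ) * (i / (m:ℤ)))) a := by
            rw [zpow_add, Equiv.Perm.mul_apply]
      _ = (π ^ i) a := by rw [Int.emod_add_mul_ediv]
  · rintro ⟨k, rfl⟩
    exact ⟨(k : ℤ), by rw [zpow_natCast]⟩

lemma image_is_orbit {π₁ π₂ : Equiv.Perm ℕ} {r : ℕ → ℕ} {Bad : Set ℕ}
    (hc : ∀ x ∉ Bad, π₁ (r x) = r (π₂ x)) {a : ℕ}
    (hfin : {b | π₂.SameCycle a b}.Finite)
    (hgood : ∀ x, π₂.SameCycle a x → x ∉ Bad) :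
    r '' {b | π₂.SameCycle a b} = {b | π₁.SameCycle (r a) b} := by
  obtain ⟨m, hm, hma⟩ := exists_pos_pow_eq hfin
  have key : ∀ k : ℕ, r ((π₂ ^ k) a) = (π₁ ^ k) (r a) := by
    intro k
    induction k with
    | zero => simp
    | succ k ih =>
        have hmem : π₂.SameCycle a ((π₂ ^ k) a) := ⟨(k:ℤ), by rw [zpow_natCast]⟩
        have h1 : (π₂ ^ (k+1)) a = π₂ ((π₂ ^ k) a) := by
          rw [pow_succ', Equiv.Perm.mul_apply]
        rw [h1, ← hc _ (hgood _ hmem), ih, ← Equiv.Perm.mul_apply, ← pow_succ']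
  have h1 : (π₁ ^ m) (r a) = r a := by rw [← key, hma]
  rw [orbit_eq_range hm hma, orbit_eq_range hm h1, ← Set.range_comp]
  exact congrArg Set.range (funext fun k => key k)

lemma nCycles_le_add (π₁ π₂ : Equiv.Perm ℕ) (h2fin : ∀ a, {b | π₂.SameCycle a b}.Finite)
    {r : ℕ → ℕ} {Bad : Set ℕ} (hinj : Set.InjOn r Badᶜ)
    (hc : ∀ x ∉ Bad, π₁ (r x) = r (π₂ x)) (n : ℕ) :
    nCycles π₂ n ≤ nCycles π₁ n + #↥Bad := by
  classical
  have hgoodify : ∀ S : {S : Set ℕ // (∃ a : ℕ, S = {b | π₂.SameCycle a b}) ∧ S.ncard = n},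
      ¬((S : Set ℕ) ∩ Bad).Nonempty →
      (∃ a : ℕ, r '' (S : Set ℕ) = {b | π₁.SameCycle a b}) ∧ (r '' (S : Set ℕ)).ncard = n := by
    rintro ⟨S, ⟨a, rfl⟩, hn⟩ hbad
    have hgood : ∀ x, π₂.SameCycle a x → x ∉ Bad := fun x hx hxB => hbad ⟨x, hx, hxB⟩
    refine ⟨⟨r a, image_is_orbit hc (h2fin a) hgood⟩, ?_⟩
    show (r '' {b | π₂.SameCycle a b}).ncard = n
    have hiS : Set.InjOn r {b | π₂.SameCycle a b} := hinj.mono (fun x hx => hgood x hx)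
    rw [Set.ncard_image_of_injOn hiS]
    exact hn
  let F : {S : Set ℕ // (∃ a : ℕ, S = {b | π₂.SameCycle a b}) ∧ S.ncard = n} →
      {S : Set ℕ // (∃ a : ℕ, S = {b | π₁.SameCycle a b}) ∧ S.ncard = n} ⊕ ↥Bad :=
    fun S => if h : ((S : Set ℕ) ∩ Bad).Nonempty
      then Sum.inr ⟨h.choose, h.choose_spec.2⟩
      else Sum.inl ⟨r '' (S : Set ℕ), hgoodify S h⟩
  have hFinj : Function.Injective F := by
    intro S S' hSS'
    obtain ⟨Sv, ⟨a, rfl⟩, hn⟩ := S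
    obtain ⟨Sv', ⟨a', rfl⟩, hn'⟩ := S'
    simp only [F] at hSS'
    rcases Classical.em (({b | π₂.SameCycle a b} : Set ℕ) ∩ Bad).Nonempty with h1 | h1 <;>
      rcases Classical.em (({b | π₂.SameCycle a' b} : Set ℕ) ∩ Bad).Nonempty with h2 | h2
    · -- both bad: common point
      rw [dif_pos h1, dif_pos h2] at hSS'
      have hxx' : h1.choose = h2.choose :=
        congrArg Subtype.val (Sum.inr_injective hSS')
      have hx1 : π₂.SameCycle a h1.choose := h1.choose_spec.1
      have hx2 : π₂.SameCycle a' h2.choose := h2.choose_spec.1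
      apply Subtype.ext
      show {b | π₂.SameCycle a b} = {b | π₂.SameCycle a' b}
      exact (orbit_eq_of_mem hx1).trans
        ((congrArg (fun z => {b | π₂.SameCycle z b}) hxx').trans
          (orbit_eq_of_mem hx2).symm)
    · rw [dif_pos h1, dif_neg h2] at hSS'
      exact absurd hSS' (by simp)
    · rw [dif_neg h1, dif_pos h2] at hSS'
      exact absurd hSS' (by simp)
    · -- both good: injectivity of image
      rw [dif_neg h1, dif_neg h2] at hSS'
      have him : r '' {b | π₂.SameCycle a b} = r '' {b | π₂.SameCycle a' b} :=
        congrArg Subtype.val (Sum.inl_injective hSS')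
      apply Subtype.ext
      show {b | π₂.SameCycle a b} = {b | π₂.SameCycle a' b}
      exact (hinj.image_eq_image_iff
        (fun x hx hxB => h1 ⟨x, hx, hxB⟩) (fun x hx hxB => h2 ⟨x, hx, hxB⟩)).mp him
  calc nCycles π₂ n ≤ #({S : Set ℕ // (∃ a : ℕ, S = {b | π₁.SameCycle a b}) ∧ S.ncard = n} ⊕ ↥Bad) :=
        Cardinal.mk_le_of_injective hFinj
    _ = nCycles π₁ n + #↥Bad := by rw [Cardinal.mk_sum, Cardinal.lift_id, Cardinal.lift_id]; rfl

lemma nCycles_le_of_allgood (π₁ π₂ : Equiv.Perm ℕ) (h2fin : ∀ a, {b | π₂.SameCycle a b}.Finite)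
    {r : ℕ → ℕ} {Bad : Set ℕ} (hinj : Set.InjOn r Badᶜ)
    (hc : ∀ x ∉ Bad, π₁ (r x) = r (π₂ x)) (n : ℕ)
    (hall : ∀ a : ℕ, ({b | π₂.SameCycle a b}).ncard = n → ∀ x, π₂.SameCycle a x → x ∉ Bad) :
    nCycles π₂ n ≤ nCycles π₁ n := by
  classical
  have hgoodify : ∀ S : {S : Set ℕ // (∃ a : ℕ, S = {b | π₂.SameCycle a b}) ∧ S.ncard = n},
      (∃ a : ℕ, r '' (S : Set ℕ) = {b | π₁.SameCycle a b}) ∧ (r '' (S : Set ℕ)).ncard = n := by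
    rintro ⟨S, ⟨a, rfl⟩, hn⟩
    have hgood := hall a hn
    refine ⟨⟨r a, image_is_orbit hc (h2fin a) hgood⟩, ?_⟩
    show (r '' {b | π₂.SameCycle a b}).ncard = n
    have hiS : Set.InjOn r {b | π₂.SameCycle a b} := hinj.mono (fun x hx => hgood x hx)
    rw [Set.ncard_image_of_injOn hiS]
    exact hn
  let F : {S : Set ℕ // (∃ a : ℕ, S = {b | π₂.SameCycle a b}) ∧ S.ncard = n} →
      {S : Set ℕ // (∃ a : ℕ, S = {b | π₁.SameCycle a b}) ∧ S.ncard = n} :=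
    fun S => ⟨r '' (S : Set ℕ), hgoodify S⟩
  have hFinj : Function.Injective F := by
    intro S S' hSS'
    have him : r '' (S : Set ℕ) = r '' (S' : Set ℕ) := congrArg Subtype.val hSS'
    obtain ⟨Sv, ⟨a, rfl⟩, hn⟩ := S
    obtain ⟨Sv', ⟨a', rfl⟩, hn'⟩ := S'
    apply Subtype.ext
    simp only at him ⊢
    exact (hinj.image_eq_image_iff
      (fun x hx => hall a hn x hx) (fun x hx => hall a' hn' x hx)).mp him
  exact Cardinal.mk_le_of_injective hFinj

lemma preimage_finite_of_injOn {f : ℕ → ℕ} {C : Set ℕ} (hf : Set.InjOn f C)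
    {T : Set ℕ} (hT : T.Finite) : {x | x ∈ C ∧ f x ∈ T}.Finite := by
  have hsub : {x | x ∈ C ∧ f x ∈ T} ⊆ ⋃ y ∈ T, {x ∈ C | f x = y} := by
    rintro x ⟨hxC, hxT⟩; exact Set.mem_biUnion hxT ⟨hxC, rfl⟩
  refine Set.Finite.subset (Set.Finite.biUnion hT fun y _ => ?_) hsub
  exact Set.Subsingleton.finite (fun x hx x' hx' => hf hx.1 hx'.1 (hx.2.trans hx'.2.symm))

lemma ne_finite_of_uf (f g : ℕ → ℕ) (C₁ C₂ : Set ℕ) (h₁ : C₁ᶜ.Finite) (h₂ : C₂ᶜ.Finite)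
    (hf : Set.InjOn f C₁) (hg : Set.InjOn g C₂)
    (h : ∀ u : Ultrafilter ℕ, (u : Filter ℕ) ≤ Filter.cofinite →
      Ultrafilter.map f u = Ultrafilter.map g u) :
    {x | f x ≠ g x}.Finite := by
  by_contra hD0
  have hD : {x | f x ≠ g x}.Infinite := hD0
  have step : ∀ F : Finset ℕ, ∃ x, (f x ≠ g x) ∧ x ∉ F ∧
      (∀ y ∈ F, f x ≠ g y ∧ g x ≠ f y) := by
    intro F
    have hbad : ((F : Set ℕ) ∪ C₁ᶜ ∪ C₂ᶜ ∪ {x | x ∈ C₁ ∧ f x ∈ g '' (F : Set ℕ)}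
        ∪ {x | x ∈ C₂ ∧ g x ∈ f '' (F : Set ℕ)}).Finite :=
      ((((F.finite_toSet.union h₁).union h₂).union
        (preimage_finite_of_injOn hf (F.finite_toSet.image g))).union
        (preimage_finite_of_injOn hg (F.finite_toSet.image f)))
    obtain ⟨x, hxD, hxbad⟩ := (hD.diff hbad).nonempty
    simp only [Set.mem_union, Set.mem_compl_iff, not_or, Set.mem_setOf_eq, not_and,
      not_not, Finset.mem_coe] at hxbad
    obtain ⟨⟨⟨⟨hxF, hxC1⟩, hxC2⟩, hp1⟩, hp2⟩ := hxbad
    refine ⟨x, hxD, hxF, fun y hy => ⟨?_, ?_⟩⟩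
    · intro hcon; exact (hp1 hxC1) ⟨y, by simpa using hy, hcon.symm⟩
    · intro hcon; exact (hp2 hxC2) ⟨y, by simpa using hy, hcon.symm⟩
  choose pick hpick using step
  obtain ⟨Fs, hFs0, hFs_succ⟩ : ∃ Fs : ℕ → Finset ℕ, Fs 0 = ∅ ∧
      ∀ k, Fs (k+1) = insert (pick (Fs k)) (Fs k) :=
    ⟨fun k => Nat.rec ∅ (fun _ F => insert (pick F) F) k, rfl, fun _ => rfl⟩
  have hmono : ∀ i j, i ≤ j → Fs i ⊆ Fs j := by
    intro i j hij
    induction hij with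
    | refl => exact subset_rfl
    | step _ ih => exact ih.trans (by rw [hFs_succ]; exact Finset.subset_insert _ _)
  have hcard : ∀ k, (Fs k).card = k := by
    intro k
    induction k with
    | zero => simp [hFs0]
    | succ k ih =>
        rw [hFs_succ, Finset.card_insert_of_notMem (hpick (Fs k)).2.1, ih]
  have hpair : ∀ k, ∀ x ∈ Fs k, ∀ y ∈ Fs k, f x ≠ g y := by
    intro k
    induction k with
    | zero => simp [hFs0]
    | succ k ih =>
        intro x hx y hy
        rw [hFs_succ, Finset.mem_insert] at hx hy
        obtain ⟨hpD, hpF, hpall⟩ := hpick (Fs k)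
        rcases hx with rfl | hx <;> rcases hy with rfl | hy
        · exact hpD
        · exact (hpall y hy).1
        · exact fun hcon => (hpall x hx).2 hcon.symm
        · exact ih x hx y hy
  obtain ⟨S, hSdef⟩ : ∃ S : Set ℕ, S = ⋃ k, ((Fs k : Finset ℕ) : Set ℕ) := ⟨_, rfl⟩
  have hSinf : S.Infinite := by
    intro hfin
    have hle : ∀ k, k ≤ hfin.toFinset.card := by
      intro k
      rw [← hcard k]
      apply Finset.card_le_card
      intro x hx
      rw [Set.Finite.mem_toFinset, hSdef]
      exact Set.mem_iUnion.mpr ⟨k, Finset.mem_coe.mpr hx⟩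
    exact absurd (hle (hfin.toFinset.card + 1)) (by omega)
  have hSpair : ∀ x ∈ S, ∀ y ∈ S, f x ≠ g y := by
    intro x hx y hy
    rw [hSdef] at hx hy
    obtain ⟨i, hi⟩ := Set.mem_iUnion.mp hx
    obtain ⟨j, hj⟩ := Set.mem_iUnion.mp hy
    exact hpair (max i j) x (hmono i _ (le_max_left i j) hi) y (hmono j _ (le_max_right i j) hj)
  have hne : (Filter.cofinite ⊓ Filter.principal S).NeBot :=
    hSinf.cofinite_inf_principal_neBot
  let u := Ultrafilter.of (Filter.cofinite ⊓ Filter.principal S)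
  have hu0 : (u : Filter ℕ) ≤ Filter.cofinite ⊓ Filter.principal S := Ultrafilter.of_le _
  have hfree : (u : Filter ℕ) ≤ Filter.cofinite := hu0.trans inf_le_left
  have huS : S ∈ u := (hu0.trans inf_le_right) (Filter.mem_principal_self S)
  have hmap := h u hfree
  have h1 : f '' S ∈ Ultrafilter.map f u :=
    Ultrafilter.mem_map.mpr (Filter.mem_of_superset huS (Set.subset_preimage_image f S))
  have h2 : g '' S ∈ Ultrafilter.map g u :=
    Ultrafilter.mem_map.mpr (Filter.mem_of_superset huS (Set.subset_preimage_image g S))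
  rw [hmap] at h1
  have hint : (f '' S ∩ g '' S) ∈ Ultrafilter.map g u := Filter.inter_mem h1 h2
  have hempty : f '' S ∩ g '' S = ∅ := by
    ext z
    simp only [Set.mem_inter_iff, Set.mem_image, Set.mem_empty_iff_false, iff_false, not_and]
    rintro ⟨x, hx, rfl⟩ ⟨y, hy, hxy⟩
    exact hSpair x hx y hy hxy.symm
  rw [hempty] at hint
  exact Ultrafilter.empty_notMem hint

end ConjTrivAux

open ConjTrivAux in
/-- If permutations φ, ψ of ℕ, all of whose orbits are finite, induce
autohomeomorphisms conjugate in Triv (via a bijection t : A → B between cofinite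
sets with φ* ∘ τ* = τ* ∘ ψ*), and κₙ = nCycles φ n, λₙ = nCycles ψ n, then
κₙ = λₙ for all but finitely many n, and for every n, κₙ is infinite iff λₙ is. -/
theorem conjugate_in_Triv_cycle_numbers
    (φ ψ : Equiv.Perm ℕ)
    (hφfin : ∀ a : ℕ, {b | φ.SameCycle a b}.Finite)
    (hψfin : ∀ a : ℕ, {b | ψ.SameCycle a b}.Finite)
    (t : ℕ → ℕ) (A B : Set ℕ)
    (hA : Aᶜ.Finite) (hB : Bᶜ.Finite) (ht : Set.BijOn t A B)
    (hconj : ∀ u : Ultrafilter ℕ, IsFreeUF u →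
      Ultrafilter.map (⇑φ) (Ultrafilter.map t u) =
      Ultrafilter.map t (Ultrafilter.map (⇑ψ) u)) :
    {n : ℕ | 1 ≤ n ∧ nCycles φ n ≠ nCycles ψ n}.Finite ∧
    ∀ n : ℕ, 1 ≤ n → (ℵ₀ ≤ nCycles φ n ↔ ℵ₀ ≤ nCycles ψ n) := by
  classical
  set s : ℕ → ℕ := Function.invFunOn t A with hs
  have hinv : Set.InvOn s t A B := ht.invOn_invFunOn
  have hsB : Set.MapsTo s B A := ht.surjOn.mapsTo_invFunOn
  -- the conjugacy holds off a finite set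
  have hC2 : (ψ ⁻¹' A)ᶜ.Finite := by
    rw [← Set.preimage_compl]
    exact Set.Finite.preimage (ψ.injective.injOn) hA
  have hE : {x | (φ ∘ t) x ≠ (t ∘ ψ) x}.Finite := by
    apply ne_finite_of_uf (φ ∘ t) (t ∘ ψ) A (ψ ⁻¹' A) hA hC2
    · exact fun x hx y hy hxy => ht.injOn hx hy (φ.injective hxy)
    · exact fun x hx y hy hxy => ψ.injective (ht.injOn hx hy hxy)
    · intro u hu
      rw [← Ultrafilter.map_map, ← Ultrafilter.map_map]
      exact hconj u hu
  have hE' : {x | φ (t x) ≠ t (ψ x)}.Finite := hE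
  set Eb : Set ℕ := {x | φ (t x) ≠ t (ψ x)} with hEbdef
  set Badψ : Set ℕ := Eb ∪ Aᶜ with hBadψdef
  have hBadψ : Badψ.Finite := hE'.union hA
  have hsubψ : Badψᶜ ⊆ A := by
    intro x hx
    rw [hBadψdef, Set.compl_union, compl_compl] at hx
    exact hx.2
  have hinjψ : Set.InjOn t Badψᶜ := ht.injOn.mono hsubψ
  have hcψ : ∀ x ∉ Badψ, φ (t x) = t (ψ x) := by
    intro x hx
    by_contra hcon
    exact hx (Or.inl hcon)
  set Badφ : Set ℕ := Bᶜ ∪ t '' (Eb ∩ A) ∪ t '' ((ψ ⁻¹' Aᶜ) ∩ A) with hBadφdef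
  have hψAc : (ψ ⁻¹' Aᶜ).Finite :=
    Set.Finite.preimage (ψ.injective.injOn) hA
  have hBadφ : Badφ.Finite :=
    (hB.union ((hE'.subset (Set.inter_subset_left)).image t)).union
      ((hψAc.subset (Set.inter_subset_left)).image t)
  have hsubφ : Badφᶜ ⊆ B := by
    intro x hx
    rw [hBadφdef, Set.compl_union, Set.compl_union, compl_compl] at hx
    exact hx.1.1
  have hinjφ : Set.InjOn s Badφᶜ := by
    intro x hx y hy hxy
    have hxB := hsubφ hx
    have hyB := hsubφ hy
    rw [← hinv.2 hxB, ← hinv.2 hyB, hxy]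
  have hcφ : ∀ m ∉ Badφ, ψ (s m) = s (φ m) := by
    intro m hm
    have hmB : m ∈ B := by
      by_contra hmB
      exact hm (Or.inl (Or.inl hmB))
    have hsmA : s m ∈ A := hsB hmB
    have htsm : t (s m) = m := hinv.2 hmB
    have hsmE : s m ∉ Eb := by
      intro hsmEb
      exact hm (Or.inl (Or.inr ⟨s m, ⟨hsmEb, hsmA⟩, htsm⟩))
    have heq : φ m = t (ψ (s m)) := by
      have h0 : φ (t (s m)) = t (ψ (s m)) := not_not.mp hsmE
      rw [htsm] at h0
      exact h0
    have hψA : ψ (s m) ∈ A := by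
      by_contra hcon
      exact hm (Or.inr ⟨s m, ⟨hcon, hsmA⟩, htsm⟩)
    rw [heq, hinv.1 hψA]
  have L1 : ∀ n, nCycles ψ n ≤ nCycles φ n + #↥Badψ :=
    nCycles_le_add φ ψ hψfin hinjψ hcψ
  have L2 : ∀ n, nCycles φ n ≤ nCycles ψ n + #↥Badφ :=
    nCycles_le_add ψ φ hφfin hinjφ hcφ
  have hBψlt : #↥Badψ < ℵ₀ := hBadψ.lt_aleph0
  have hBφlt : #↥Badφ < ℵ₀ := hBadφ.lt_aleph0
  have part2 : ∀ n : ℕ, 1 ≤ n → (ℵ₀ ≤ nCycles φ n ↔ ℵ₀ ≤ nCycles ψ n) := by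
    intro n _
    constructor
    · intro hκ
      by_contra hlam
      push_neg at hlam
      exact absurd ((hκ.trans (L2 n)).trans_lt (Cardinal.add_lt_aleph0 hlam hBφlt)) (lt_irrefl _)
    · intro hlam
      by_contra hκ
      push_neg at hκ
      exact absurd ((hlam.trans (L1 n)).trans_lt (Cardinal.add_lt_aleph0 hκ hBψlt)) (lt_irrefl _)
  refine ⟨?_, part2⟩
  have hNfin : ((fun x => ({b | ψ.SameCycle x b}).ncard) '' Badψ ∪
      (fun x => ({b | φ.SameCycle x b}).ncard) '' Badφ).Finite :=
    (hBadψ.image _).union (hBadφ.image _)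
  apply hNfin.subset
  rintro n ⟨hn1, hnne⟩
  by_contra hnN
  apply hnne
  have hnN1 : n ∉ (fun x => ({b | ψ.SameCycle x b}).ncard) '' Badψ :=
    fun hcon => hnN (Or.inl hcon)
  have hnN2 : n ∉ (fun x => ({b | φ.SameCycle x b}).ncard) '' Badφ :=
    fun hcon => hnN (Or.inr hcon)
  apply le_antisymm
  · apply nCycles_le_of_allgood ψ φ hφfin hinjφ hcφ n
    intro a ha x hax hxB
    apply hnN2
    refine ⟨x, hxB, ?_⟩
    show ({b | φ.SameCycle x b}).ncard = n
    rw [← orbit_eq_of_mem hax]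
    exact ha
  · apply nCycles_le_of_allgood φ ψ hψfin hinjψ hcψ n
    intro a ha x hax hxB
    apply hnN1
    refine ⟨x, hxB, ?_⟩
    show ({b | ψ.SameCycle x b}).ncard = n
    rw [← orbit_eq_of_mem hax]
    exact ha
end

section
/- If x and y are infinite subsets of {2,3,4,...} whose symmetric difference is infinite, and π_x, π_y are permutations of ℕ having exactly one cycle of length n for each n in x (respectively y) and no other nontrivial cycles and no infinite orbits, then π_x* and π_y* are not conjugate in Triv. -/
open Cardinal

lemma orbit_struct (π : Equiv.Perm ℕ) (a : ℕ) (hfin : {b | π.SameCycle a b}.Finite) :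
    ∃ d : ℕ, 0 < d ∧ (π ^ d) a = a ∧ {b | π.SameCycle a b}.ncard = d ∧
      (∀ m, 0 < m → (π ^ m) a = a → d ≤ m) ∧
      ∀ b ∈ {b | π.SameCycle a b}, ∃ k < d, (π ^ k) a = b := by
  set K := {b | π.SameCycle a b} with hK
  have hmemN : ∀ k : ℕ, (π ^ k) a ∈ K := fun k => ⟨(k : ℤ), by simp⟩
  have hfs := hfin.to_subtype
  -- a is periodic
  have hper : a ∈ Function.periodicPts ⇑π := by
    obtain ⟨k, l, hkl, he⟩ := Finite.exists_ne_map_eq_of_infinite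
      (fun k : ℕ => (⟨(π ^ k) a, hmemN k⟩ : K))
    have he' : (π ^ k) a = (π ^ l) a := congrArg Subtype.val he
    rcases hkl.lt_or_gt with h | h
    · have hp : (π ^ (l - k)) a = a := by
        have : (π ^ k) ((π ^ (l - k)) a) = (π ^ k) a := by
          rw [← Equiv.Perm.mul_apply, ← pow_add, add_comm k, Nat.sub_add_cancel h.le, he']
        exact (π ^ k).injective this
      exact Function.mk_mem_periodicPts (Nat.sub_pos_of_lt h) hp
    · have hp : (π ^ (k - l)) a = a := by
        have : (π ^ l) ((π ^ (k - l)) a) = (π ^ l) a := by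
          rw [← Equiv.Perm.mul_apply, ← pow_add, add_comm l, Nat.sub_add_cancel h.le, ← he']
        exact (π ^ l).injective this
      exact Function.mk_mem_periodicPts (Nat.sub_pos_of_lt h) hp
  set d := Function.minimalPeriod ⇑π a with hd
  have hdpos : 0 < d := Function.minimalPeriod_pos_of_mem_periodicPts hper
  have hda : (π ^ d) a = a := Function.isPeriodicPt_minimalPeriod ⇑π a
  have hmin : ∀ m, 0 < m → (π ^ m) a = a → d ≤ m := fun m hm hma =>
    Function.IsPeriodicPt.minimalPeriod_le hm hma
  -- ℤ-powers reduce
  have hdz : (π ^ (d:ℤ)) a = a := by rw [zpow_natCast]; exact hda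
  have h1 : ∀ q : ℤ, (π ^ ((d:ℤ) * q)) a = a := by
    intro q
    induction q using Int.induction_on with
    | zero => simp
    | succ n ih =>
      have h2 : (π ^ ((d:ℤ) * (n+1))) a = (π ^ ((d:ℤ)*n)) ((π ^ (d:ℤ)) a) := by
        rw [← Equiv.Perm.mul_apply, ← zpow_add]; ring_nf
      rw [h2, hdz]; exact ih
    | pred n ih =>
      have h2 : (π ^ ((d:ℤ) * (-n-1) + (d:ℤ))) a = (π ^ ((d:ℤ)*(-n-1))) ((π ^ (d:ℤ)) a) := by
        rw [← Equiv.Perm.mul_apply, ← zpow_add]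
      rw [hdz] at h2
      have h3 : (d:ℤ) * (-n-1) + (d:ℤ) = (d:ℤ) * (-(n:ℤ)) := by ring
      rw [h3] at h2
      rw [← h2]; exact ih
  have hzred : ∀ i : ℤ, (π ^ i) a = (π ^ ((i % (d:ℤ)).toNat)) a := by
    intro i
    have hdecomp : i = (d:ℤ) * (i / (d:ℤ)) + i % (d:ℤ) := (Int.mul_ediv_add_emod i d).symm
    have hr : (0:ℤ) ≤ i % (d:ℤ) := Int.emod_nonneg i (by exact_mod_cast hdpos.ne')
    calc (π ^ i) a = (π ^ (i % (d:ℤ))) ((π ^ ((d:ℤ) * (i / (d:ℤ)))) a) := by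
          rw [← Equiv.Perm.mul_apply, ← zpow_add, add_comm]; rw [← hdecomp]
      _ = (π ^ (i % (d:ℤ))) a := by rw [h1]
      _ = (π ^ ((i % (d:ℤ)).toNat)) a := by
          rw [← zpow_natCast, Int.toNat_of_nonneg hr]
  have hcover : ∀ b ∈ K, ∃ k < d, (π ^ k) a = b := by
    rintro b ⟨i, hi⟩
    refine ⟨(i % (d:ℤ)).toNat, ?_, by rw [← hzred]; exact hi⟩
    have : i % (d:ℤ) < (d:ℤ) := Int.emod_lt_of_pos i (by exact_mod_cast hdpos)
    omega
  -- K equals the image of range d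
  have hKeq : K = (fun k => (π ^ k) a) '' (Set.Iio d) := by
    apply Set.Subset.antisymm
    · intro b hb
      obtain ⟨k, hk, he⟩ := hcover b hb
      exact ⟨k, hk, he⟩
    · rintro b ⟨k, _, rfl⟩; exact hmemN k
  have hinj : Set.InjOn (fun k => (π ^ k) a) (Set.Iio d) := by
    intro j hj k hk he
    simp only [Set.mem_Iio] at hj hk
    by_contra hne
    rcases Nat.lt_or_ge j k with h | h
    · have hp : (π ^ (k - j)) a = a := by
        have : (π ^ j) ((π ^ (k - j)) a) = (π ^ j) a := by
          rw [← Equiv.Perm.mul_apply, ← pow_add, add_comm j, Nat.sub_add_cancel h.le]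
          exact he.symm
        exact (π ^ j).injective this
      have := hmin _ (Nat.sub_pos_of_lt h) hp
      omega
    · have h' : k < j := by omega
      have hp : (π ^ (j - k)) a = a := by
        have : (π ^ k) ((π ^ (j - k)) a) = (π ^ k) a := by
          rw [← Equiv.Perm.mul_apply, ← pow_add, add_comm k, Nat.sub_add_cancel h'.le]
          exact he
        exact (π ^ k).injective this
      have := hmin _ (Nat.sub_pos_of_lt h') hp
      omega
  have hcard : K.ncard = d := by
    rw [hKeq, Set.ncard_image_of_injOn hinj]
    rw [← Nat.card_coe_set_eq]; simpa using Nat.card_Iio d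
  exact ⟨d, hdpos, hda, hcard, hmin, hcover⟩

lemma transfer_cycle (π σ : Equiv.Perm ℕ) (h : ℕ → ℕ) (a : ℕ) (n : ℕ) (hn : 0 < n)
    (hπfin : {b | π.SameCycle a b}.Finite)
    (hσfin : {b | σ.SameCycle (h a) b}.Finite)
    (hcardK : {b | π.SameCycle a b}.ncard = n)
    (hinj : Set.InjOn h {b | π.SameCycle a b})
    (hcomm : ∀ b ∈ {b | π.SameCycle a b}, h (π b) = σ (h b)) :
    {b | σ.SameCycle (h a) b}.ncard = n := by
  set K := {b | π.SameCycle a b} with hK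
  set K' := {b | σ.SameCycle (h a) b} with hK'
  have hmemN : ∀ k : ℕ, (π ^ k) a ∈ K := fun k => ⟨(k : ℤ), by simp⟩
  have hmemN' : ∀ k : ℕ, (σ ^ k) (h a) ∈ K' := fun k => ⟨(k : ℤ), by simp⟩
  obtain ⟨d, hdpos, hda, hcard, hmin, hcover⟩ := orbit_struct π a hπfin
  obtain ⟨d', hdpos', hda', hcard', hmin', hcover'⟩ := orbit_struct σ (h a) hσfin
  have hdn : d = n := by rw [← hcardK]; exact hcard.symm
  have hstep : ∀ k : ℕ, h ((π ^ k) a) = (σ ^ k) (h a) := by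
    intro k
    induction k with
    | zero => simp
    | succ k ih =>
      have e1 : (π ^ (k+1)) a = π ((π ^ k) a) := by
        rw [pow_succ', Equiv.Perm.mul_apply]
      have e2 : (σ ^ (k+1)) (h a) = σ ((σ ^ k) (h a)) := by
        rw [pow_succ', Equiv.Perm.mul_apply]
      rw [e1, e2, hcomm _ (hmemN k), ih]
  have hσn : (σ ^ n) (h a) = h a := by
    rw [← hstep n, ← hdn, hda]
  have hd'n : d' ≤ n := hmin' n hn hσn
  have himg : h '' K ⊆ K' := by
    rintro _ ⟨b, hb, rfl⟩
    obtain ⟨k, _, rfl⟩ := hcover b hb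
    rw [hstep k]
    exact hmemN' k
  have hle : n ≤ d' := by
    calc n = (h '' K).ncard := by rw [Set.ncard_image_of_injOn hinj, hcardK]
      _ ≤ K'.ncard := Set.ncard_le_ncard himg hσfin
      _ = d' := hcard'
  rw [hcard']; omega

lemma exists_conflict_set (f g : ℕ → ℕ) (D : Set ℕ) (hD : D.Infinite)
    (hfg : ∀ n ∈ D, f n ≠ g n) (hf : Set.InjOn f D) (hg : Set.InjOn g D) :
    ∃ S : Set ℕ, S.Infinite ∧ S ⊆ D ∧ ∀ a ∈ S, ∀ b ∈ S, f a ≠ g b := by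
  classical
  set bad : Finset ℕ → Set ℕ :=
    fun T => ↑T ∪ (D ∩ f ⁻¹' (g '' ↑T)) ∪ (D ∩ g ⁻¹' (f '' ↑T)) with hbad
  have hbadfin : ∀ T, (bad T).Finite := by
    intro T
    have h1 : (D ∩ f ⁻¹' (g '' ↑T)).Finite := by
      apply Set.Finite.of_finite_image (f := f)
      · exact (T.finite_toSet.image g).subset (by
          rintro _ ⟨c, ⟨hcD, hc⟩, rfl⟩; exact hc)
      · exact hf.mono Set.inter_subset_left
    have h2 : (D ∩ g ⁻¹' (f '' ↑T)).Finite := by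
      apply Set.Finite.of_finite_image (f := g)
      · exact (T.finite_toSet.image f).subset (by
          rintro _ ⟨c, ⟨hcD, hc⟩, rfl⟩; exact hc)
      · exact hg.mono Set.inter_subset_left
    exact (T.finite_toSet.union h1).union h2
  have hne : ∀ T : Finset ℕ, (D \ bad T).Nonempty := fun T => (hD.diff (hbadfin T)).nonempty
  set pick : Finset ℕ → ℕ := fun T => (hne T).choose with hpick
  have hpickspec : ∀ T, pick T ∈ D \ bad T := fun T => (hne T).choose_spec
  set F : ℕ → Finset ℕ := fun n => Nat.rec ∅ (fun _ T => insert (pick T) T) n with hF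
  have hFsucc : ∀ n, F (n+1) = insert (pick (F n)) (F n) := fun n => rfl
  have hmono : Monotone F := monotone_nat_of_le_succ (fun n => by
    rw [hFsucc]; exact Finset.subset_insert _ _)
  have hinv : ∀ n, ↑(F n) ⊆ D ∧ (∀ a ∈ F n, ∀ b ∈ F n, f a ≠ g b) ∧ (F n).card = n := by
    intro n
    induction n with
    | zero => simp [hF]
    | succ n ih =>
      obtain ⟨hsub, hgood, hcard⟩ := ih
      have hp := hpickspec (F n)
      have hpD : pick (F n) ∈ D := hp.1
      have hpnb : pick (F n) ∉ bad (F n) := hp.2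
      have hpT : pick (F n) ∉ F n := fun h => hpnb (Or.inl (Or.inl h))
      refine ⟨?_, ?_, ?_⟩
      · rw [hFsucc]; push_cast
        exact Set.insert_subset hpD hsub
      · rw [hFsucc]
        intro a ha b hb
        rcases Finset.mem_insert.mp ha with rfl | ha <;>
          rcases Finset.mem_insert.mp hb with hb' | hb'
        · rw [hb']; exact hfg _ hpD
        · intro he
          exact hpnb (Or.inl (Or.inr ⟨hpD, ⟨b, hb', he.symm⟩⟩))
        · subst hb'
          intro he
          exact hpnb (Or.inr ⟨hpD, ⟨a, ha, he⟩⟩)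
        · exact hgood a ha b hb'
      · rw [hFsucc, Finset.card_insert_of_notMem hpT, hcard]
  refine ⟨⋃ n, ↑(F n), ?_, ?_, ?_⟩
  · intro hS
    have hsub : F (hS.toFinset.card + 1) ⊆ hS.toFinset := by
      intro a ha
      rw [Set.Finite.mem_toFinset]
      exact Set.mem_iUnion.mpr ⟨hS.toFinset.card + 1, Finset.mem_coe.mpr ha⟩
    have h2 := Finset.card_le_card hsub
    have h3 := (hinv (hS.toFinset.card + 1)).2.2
    omega
  · intro a ha
    obtain ⟨n, hn⟩ := Set.mem_iUnion.mp ha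
    exact (hinv n).1 hn
  · intro a ha b hb
    obtain ⟨i, hi⟩ := Set.mem_iUnion.mp ha
    obtain ⟨j, hj⟩ := Set.mem_iUnion.mp hb
    exact (hinv (max i j)).2.1 a (hmono (le_max_left i j) hi) b (hmono (le_max_right i j) hj)

lemma eq_cofinite_of_ultrafilter (f g : ℕ → ℕ) (W : Set ℕ) (hW : Wᶜ.Finite)
    (hfW : Set.InjOn f W) (hgW : Set.InjOn g W)
    (h : ∀ u : Ultrafilter ℕ, (u : Filter ℕ) ≤ Filter.cofinite →
      Ultrafilter.map f u = Ultrafilter.map g u) :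
    {n | f n ≠ g n}.Finite := by
  by_contra hD
  have hDinf : {n | f n ≠ g n}.Infinite := hD
  have hD' : ({n | f n ≠ g n} \ Wᶜ).Infinite := hDinf.diff hW
  set D' := {n | f n ≠ g n} \ Wᶜ with hD'def
  have hD'W : D' ⊆ W := fun a ha => not_not.mp ha.2
  obtain ⟨S, hSinf, hSD, hSgood⟩ := exists_conflict_set f g D' hD'
    (fun n hn => hn.1) (hfW.mono hD'W) (hgW.mono hD'W)
  have hneBot : Filter.NeBot (Filter.cofinite ⊓ Filter.principal S) := by
    rw [Filter.inf_principal_neBot_iff]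
    intro U hU
    have : (S \ Uᶜ).Infinite := hSinf.diff hU
    obtain ⟨a, ha⟩ := this.nonempty
    exact ⟨a, not_not.mp ha.2, ha.1⟩
  haveI := hneBot
  obtain ⟨u, hu⟩ := Ultrafilter.exists_le (Filter.cofinite ⊓ Filter.principal S)
  have hufree : (u : Filter ℕ) ≤ Filter.cofinite := hu.trans inf_le_left
  have hSu : S ∈ u := Filter.le_principal_iff.mp (hu.trans inf_le_right)
  have heq := h u hufree
  have hfT : f ⁻¹' (f '' S) ∈ u :=
    Filter.mem_of_superset hSu (Set.subset_preimage_image f S)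
  have hgT : g ⁻¹' (f '' S) ∈ u := by
    rw [← Ultrafilter.mem_map, ← heq, Ultrafilter.mem_map]
    exact hfT
  have hcompl : (g ⁻¹' (f '' S))ᶜ ∈ u := by
    apply Filter.mem_of_superset hSu
    intro b hb
    rintro ⟨a, ha, he⟩
    exact hSgood a ha b hb he
  rw [Ultrafilter.compl_mem_iff_notMem] at hcompl
  exact hcompl hgT


lemma class_eq_of_sameCycle (π : Equiv.Perm ℕ) {a c : ℕ} (h : π.SameCycle a c) :
    {b | π.SameCycle a b} = {b | π.SameCycle c b} := by
  ext b
  exact ⟨fun hb => (h.symm).trans hb, fun hb => h.trans hb⟩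

lemma pick_cycle (π : Equiv.Perm ℕ) (z : Set ℕ) (hz : z.Infinite)
    (hz2 : z ⊆ {n : ℕ | 2 ≤ n})
    (h1 : ∀ n ∈ z, nCycles π n = 1)
    (F : Set ℕ) (hF : F.Finite) :
    ∃ n ∈ z, ∃ a : ℕ, {b | π.SameCycle a b}.ncard = n ∧
      ∀ b ∈ {b | π.SameCycle a b}, b ∉ F := by
  by_contra hcon
  push_neg at hcon
  have key : ∀ n ∈ z, ∃ a c : ℕ, {b | π.SameCycle a b}.ncard = n ∧
      π.SameCycle a c ∧ c ∈ F := by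
    intro n hn
    have h01 : nCycles π n ≠ 0 := by rw [h1 n hn]; exact one_ne_zero
    obtain ⟨⟨S, ⟨a, hSa⟩, hScard⟩⟩ := Cardinal.mk_ne_zero_iff.mp h01
    subst hSa
    obtain ⟨c, hc1, hc2⟩ := hcon n hn a hScard
    exact ⟨a, c, hScard, hc1, hc2⟩
  choose! a c hcard hsc hcF using key
  have hinj : Set.InjOn c z := by
    intro n hn m hm he
    have e1 : {b | π.SameCycle (a n) b} = {b | π.SameCycle (c n) b} :=
      class_eq_of_sameCycle π (hsc n hn)
    have e2 : {b | π.SameCycle (a m) b} = {b | π.SameCycle (c m) b} :=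
      class_eq_of_sameCycle π (hsc m hm)
    have : {b | π.SameCycle (a n) b} = {b | π.SameCycle (a m) b} := by
      rw [e1, e2, he]
    have := congrArg Set.ncard this
    rw [hcard n hn, hcard m hm] at this
    exact this
  have : z.Finite := Set.Finite.of_finite_image
    (hF.subset (by rintro _ ⟨m, hm, rfl⟩; exact hcF m hm)) hinj
  exact hz this


/-- If x, y ⊆ {n : 2 ≤ n} are infinite with infinite symmetric
difference, and π_x, π_y are permutations of ℕ with exactly one cycle of each length
n ∈ x (resp. n ∈ y), no other nontrivial cycles and no infinite orbits, then π_x* and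
π_y* are not conjugate in Triv: no bijection τ between cofinite subsets of ℕ satisfies
π_x* ∘ τ* = τ* ∘ π_y* on free ultrafilters. -/
theorem nonconjugate_in_Triv_of_infinite_symmDiff
    (x y : Set ℕ) (hx2 : x ⊆ {n : ℕ | 2 ≤ n}) (hy2 : y ⊆ {n : ℕ | 2 ≤ n})
    (hxinf : x.Infinite) (hyinf : y.Infinite)
    (hsd : (symmDiff x y).Infinite)
    (πx πy : Equiv.Perm ℕ)
    (hx1 : ∀ n ∈ x, nCycles πx n = 1)
    (hx0 : ∀ n : ℕ, 2 ≤ n → n ∉ x → nCycles πx n = 0)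
    (hxfin : ∀ a : ℕ, {b | πx.SameCycle a b}.Finite)
    (hy1 : ∀ n ∈ y, nCycles πy n = 1)
    (hy0 : ∀ n : ℕ, 2 ≤ n → n ∉ y → nCycles πy n = 0)
    (hyfin : ∀ a : ℕ, {b | πy.SameCycle a b}.Finite) :
    ¬ ∃ (t : ℕ → ℕ) (A B : Set ℕ), Aᶜ.Finite ∧ Bᶜ.Finite ∧ Set.BijOn t A B ∧
        ∀ u : Ultrafilter ℕ, IsFreeUF u →
          Ultrafilter.map (⇑πx) (Ultrafilter.map t u) =
          Ultrafilter.map t (Ultrafilter.map (⇑πy) u) := by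
  rintro ⟨t, A, B, hA, hB, hbij, hcomm⟩
  -- Step 1: πx ∘ t = t ∘ πy off a finite set
  have hpre : (⇑πy ⁻¹' Aᶜ).Finite :=
    Set.Finite.preimage (πy.injective.injOn.mono (Set.subset_univ _)) hA
  have hWc : (A ∩ ⇑πy ⁻¹' A)ᶜ.Finite := by
    rw [Set.compl_inter]
    exact hA.union (by rw [← Set.preimage_compl]; exact hpre)
  have hCfin : {n | (⇑πx ∘ t) n ≠ (t ∘ ⇑πy) n}.Finite := by
    apply eq_cofinite_of_ultrafilter (⇑πx ∘ t) (t ∘ ⇑πy) (A ∩ ⇑πy ⁻¹' A) hWc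
    · intro a ha b hb he
      exact hbij.injOn ha.1 hb.1 (πx.injective he)
    · intro a ha b hb he
      exact πy.injective (hbij.injOn ha.2 hb.2 he)
    · intro u hu
      have := hcomm u hu
      rwa [Ultrafilter.map_map, Ultrafilter.map_map] at this
  set Cbad := {n | (⇑πx ∘ t) n ≠ (t ∘ ⇑πy) n} with hCbad
  -- case split
  rw [symmDiff_def] at hsd
  rcases Set.infinite_union.mp hsd with hxy | hyx
  · -- x \ y infinite : use inverse map s
    set s := Function.invFunOn t A with hs
    have hts : ∀ b ∈ B, t (s b) = b := fun b hb =>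
      hbij.surjOn.rightInvOn_invFunOn hb
    have hsA : ∀ b ∈ B, s b ∈ A := fun b hb => hbij.surjOn.mapsTo_invFunOn hb
    have hst : ∀ a ∈ A, s (t a) = a := fun a ha => hbij.injOn.leftInvOn_invFunOn ha
    have hsinj : Set.InjOn s B := by
      intro b hb b' hb' he
      rw [← hts b hb, ← hts b' hb', he]
    set E := {b | b ∈ B ∧ πx b ∈ B ∧ s b ∉ Cbad ∧ πy (s b) ∈ A} with hE
    have hEc : Eᶜ.Finite := by
      apply Set.Finite.subset
        (((hB.union (Set.Finite.preimage (πx.injective.injOn.mono (Set.subset_univ _)) hB)).union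
          (hCfin.image t)).union (hpre.image t))
      intro b hb
      simp only [hE, Set.mem_compl_iff, Set.mem_setOf_eq, not_and_or, not_not] at hb
      rcases hb with h | h | h | h
      · exact Or.inl (Or.inl (Or.inl h))
      · by_cases hbB : b ∈ B
        · exact Or.inl (Or.inl (Or.inr h))
        · exact Or.inl (Or.inl (Or.inl hbB))
      · by_cases hbB : b ∈ B
        · exact Or.inl (Or.inr ⟨s b, h, hts b hbB⟩)
        · exact Or.inl (Or.inl (Or.inl hbB))
      · by_cases hbB : b ∈ B
        · exact Or.inr ⟨s b, h, hts b hbB⟩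
        · exact Or.inl (Or.inl (Or.inl hbB))
    obtain ⟨n, hnxy, a, hcard, havoid⟩ := pick_cycle πx (x \ y) hxy
      (fun n hn => hx2 hn.1) (fun n hn => hx1 n hn.1) Eᶜ hEc
    have hn2 : 2 ≤ n := hx2 hnxy.1
    have hKE : ∀ b ∈ {b | πx.SameCycle a b}, b ∈ E := fun b hb =>
      not_not.mp (havoid b hb)
    have hres := transfer_cycle πx πy s a n (by omega) (hxfin a) (hyfin (s a)) hcard
      (hsinj.mono (fun b hb => (hKE b hb).1))
      (by
        intro b hb
        obtain ⟨hbB, hπxB, hsbC, hπysA⟩ := hKE b hb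
        have h1 : πx (t (s b)) = t (πy (s b)) := not_not.mp hsbC
        rw [hts b hbB] at h1
        have h2 : t (s (πx b)) = πx b := hts _ hπxB
        apply hbij.injOn (hsA _ hπxB) hπysA
        rw [h2, h1])
    have : nCycles πy n ≠ 0 :=
      Cardinal.mk_ne_zero_iff.mpr ⟨⟨{b | πy.SameCycle (s a) b}, ⟨s a, rfl⟩, hres⟩⟩
    exact this (hy0 n hn2 hnxy.2)
  · -- y \ x infinite : use t directly
    obtain ⟨n, hnyx, a, hcard, havoid⟩ := pick_cycle πy (y \ x) hyx
      (fun n hn => hy2 hn.1) (fun n hn => hy1 n hn.1) (Cbad ∪ Aᶜ) (hCfin.union hA)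
    have hn2 : 2 ≤ n := hy2 hnyx.1
    have hKgood : ∀ b ∈ {b | πy.SameCycle a b}, b ∉ Cbad ∧ b ∈ A := by
      intro b hb
      have := havoid b hb
      simp only [Set.mem_union, Set.mem_compl_iff, not_or, not_not] at this
      exact this
    have hres := transfer_cycle πy πx t a n (by omega) (hyfin a) (hxfin (t a)) hcard
      (hbij.injOn.mono (fun b hb => (hKgood b hb).2))
      (by
        intro b hb
        exact (not_not.mp (hKgood b hb).1).symm)
    have : nCycles πx n ≠ 0 :=
      Cardinal.mk_ne_zero_iff.mpr ⟨⟨{b | πx.SameCycle (t a) b}, ⟨t a, rfl⟩, hres⟩⟩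
    exact this (hx0 n hn2 hnyx.2)
end
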